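/- arXiv:2510.06316 — 7 statements merged into one kernel-verified Lean document; each statement's English description precedes it below -/
import Mathlib

section
/- If J and K are matrices with ‖J‖, ‖K‖ ≤ 1 − ξ for some 0 < ξ < 1, then ‖J − K‖ ≤ (1/ξ)·‖e^{-iJ} − e^{-iK}‖. -/
/-- Spectral (L2 operator) norm on square complex matrices. -/
noncomputable instance matSpectralNormedRing {m : Type*} [Fintype m] [DecidableEq m] :
    NormedRing (Matrix m m ℂ) := Matrix.instL2OpNormedRing

noncomputable instance matSpectralNormedAlgebra {m : Type*} [Fintype m] [DecidableEq m] :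
    NormedAlgebra ℂ (Matrix m m ℂ) := Matrix.instL2OpNormedAlgebra

open scoped Nat

section Aux

variable {m : Type*} [Fintype m] [DecidableEq m]

noncomputable instance clmTopRing : IsTopologicalRing (Matrix m m ℂ →L[ℂ] Matrix m m ℂ) :=
  @NonUnitalSeminormedRing.toIsTopologicalRing (Matrix m m ℂ →L[ℂ] Matrix m m ℂ) inferInstance

noncomputable instance clmRatAlg : NormedAlgebra ℚ (Matrix m m ℂ →L[ℂ] Matrix m m ℂ) :=
  NormedAlgebra.restrictScalars ℚ ℂ _

noncomputable instance matRatAlg : NormedAlgebra ℚ (Matrix m m ℂ) :=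
  NormedAlgebra.restrictScalars ℚ ℂ _

local notation "E" => Matrix m m ℂ

/-- Left multiplication as a continuous linear map. -/
noncomputable def lmulM (C : E) : E →L[ℂ] E := ContinuousLinearMap.mul ℂ E C

/-- Right multiplication as a continuous linear map. -/
noncomputable def rmulM (C : E) : E →L[ℂ] E := (ContinuousLinearMap.mul ℂ E).flip C

@[simp] lemma lmulM_apply (C X : E) : lmulM C X = C * X := rfl
@[simp] lemma rmulM_apply (C X : E) : rmulM C X = X * C := rfl

lemma lmulM_neg (C : E) : lmulM (-C) = -lmulM C := by
  ext X; simp [neg_mul]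

lemma rmulM_neg (C : E) : rmulM (-C) = -rmulM C := by
  ext X; simp [mul_neg]

lemma lmulM_pow (C : E) (k : ℕ) : (lmulM C) ^ k = lmulM (C ^ k) := by
  induction k with
  | zero => ext X; simp
  | succ k ih =>
    rw [pow_succ, ih]
    ext X
    simp only [ContinuousLinearMap.mul_apply, lmulM_apply, pow_succ, mul_assoc]

lemma rmulM_pow (C : E) (k : ℕ) : (rmulM C) ^ k = rmulM (C ^ k) := by
  induction k with
  | zero => ext X; simp
  | succ k ih =>
    rw [pow_succ, ih]
    ext X
    simp only [ContinuousLinearMap.mul_apply, rmulM_apply, pow_succ']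
    rw [mul_assoc]

lemma commute_lmulM_rmulM (C D : E) : Commute (lmulM C) (rmulM D) := by
  ext X
  simp [ContinuousLinearMap.mul_apply, mul_assoc]

lemma exp_lmulM (C : E) :
    NormedSpace.exp (lmulM C) = lmulM (NormedSpace.exp C) := by
  have h1 : HasSum (fun k : ℕ => (k !⁻¹ : ℂ) • C ^ k) (NormedSpace.exp C) :=
    NormedSpace.exp_series_hasSum_exp' C
  have h2 := (ContinuousLinearMap.mul ℂ E).hasSum h1
  have h3 : HasSum (fun k : ℕ => (k !⁻¹ : ℂ) • (lmulM C) ^ k)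
      (lmulM (NormedSpace.exp C)) := by
    convert h2 using 2 with k
    rw [lmulM_pow]
    exact (map_smul (ContinuousLinearMap.mul ℂ E) _ _).symm
    rfl
  exact (NormedSpace.exp_series_hasSum_exp' (𝕂 := ℂ) (lmulM C)).unique h3

lemma exp_rmulM (C : E) :
    NormedSpace.exp (rmulM C) = rmulM (NormedSpace.exp C) := by
  have h1 : HasSum (fun k : ℕ => (k !⁻¹ : ℂ) • C ^ k) (NormedSpace.exp C) :=
    NormedSpace.exp_series_hasSum_exp' C
  have h2 := ((ContinuousLinearMap.mul ℂ E).flip).hasSum h1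
  have h3 : HasSum (fun k : ℕ => (k !⁻¹ : ℂ) • (rmulM C) ^ k)
      (rmulM (NormedSpace.exp C)) := by
    convert h2 using 2 with k
    rw [rmulM_pow]
    exact (map_smul ((ContinuousLinearMap.mul ℂ E).flip) _ _).symm
    rfl
  exact (NormedSpace.exp_series_hasSum_exp' (𝕂 := ℂ) (rmulM C)).unique h3

lemma norm_lmulM_le (C : E) : ‖lmulM C‖ ≤ ‖C‖ :=
  ContinuousLinearMap.opNorm_mul_apply_le ℂ E C

lemma norm_rmulM_le (C : E) : ‖rmulM C‖ ≤ ‖C‖ :=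
  ContinuousLinearMap.opNorm_le_bound _ (norm_nonneg C) fun X =>
    (norm_mul_le X C).trans_eq (mul_comm _ _)

lemma matrix_norm_one_le : ‖(1 : E)‖ ≤ 1 := by
  have h : ‖(1 : E)‖ = ‖Matrix.toEuclideanCLM (n := m) (𝕜 := ℂ) (1 : E)‖ := rfl
  rw [h, map_one]
  exact ContinuousLinearMap.norm_id_le

lemma matrix_norm_exp_le (C : E) : ‖NormedSpace.exp C‖ ≤ Real.exp ‖C‖ := by
  rw [NormedSpace.exp_eq_tsum ℂ]
  refine (norm_tsum_le_tsum_norm (NormedSpace.norm_expSeries_summable' C)).trans ?_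
  rw [Real.exp_eq_exp_ℝ, NormedSpace.exp_eq_tsum ℝ]
  refine Summable.tsum_le_tsum ?_ (NormedSpace.norm_expSeries_summable' C)
    (NormedSpace.expSeries_summable' (𝕂 := ℝ) ‖C‖)
  intro k
  rw [norm_smul, norm_inv]
  have h1 : ‖((k ! : ℂ))‖ = (k ! : ℝ) := by
    simp
  rw [h1]
  rcases Nat.eq_zero_or_pos k with hk | hk
  · subst hk
    simpa using matrix_norm_one_le (m := m)
  · have h2 : ‖C ^ k‖ ≤ ‖C‖ ^ k := norm_pow_le' C hk
    have h3 : (0 : ℝ) ≤ (k ! : ℝ)⁻¹ := by positivity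
    simpa [smul_eq_mul] using mul_le_mul_of_nonneg_left h2 h3

end Aux

set_option maxHeartbeats 2000000 in
/-- If `‖J‖, ‖K‖ ≤ 1 − ξ` with `0 < ξ < 1`, then
`‖J − K‖ ≤ (1/ξ)·‖e^{-iJ} − e^{-iK}‖` in the spectral norm. -/
theorem norm_sub_le_inv_mul_norm_exp_sub_exp {n : ℕ} (J K : Matrix (Fin n) (Fin n) ℂ)
    (ξ : ℝ) (hξ0 : 0 < ξ) (hξ1 : ξ < 1)
    (hJ : ‖J‖ ≤ 1 - ξ) (hK : ‖K‖ ≤ 1 - ξ) :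
    ‖J - K‖ ≤ (1 / ξ) *
      ‖NormedSpace.exp ((-Complex.I) • J) - NormedSpace.exp ((-Complex.I) • K)‖ := by
  classical
  set u : ℝ := 1 - ξ with hu
  have hu0 : 0 < u := by simp only [hu]; linarith
  have hu1 : u < 1 := by simp only [hu]; linarith
  set Δ : Matrix (Fin n) (Fin n) ℂ := J - K with hΔ
  set P : Matrix (Fin n) (Fin n) ℂ := ((-Complex.I) / 2) • J with hP
  set Q : Matrix (Fin n) (Fin n) ℂ := ((-Complex.I) / 2) • K with hQ
  have hnormI2 : ‖((-Complex.I) / 2 : ℂ)‖ = 1 / 2 := by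
    simp [norm_div]
  have hPnorm : ‖P‖ ≤ u / 2 := by
    rw [hP, norm_smul, hnormI2]; nlinarith [norm_nonneg J]
  have hQnorm : ‖Q‖ ≤ u / 2 := by
    rw [hQ, norm_smul, hnormI2]; nlinarith [norm_nonneg K]
  set w : Matrix (Fin n) (Fin n) ℂ →L[ℂ] Matrix (Fin n) (Fin n) ℂ := lmulM P - rmulM Q with hw
  have hwnorm : ‖w‖ ≤ u := by
    calc ‖w‖ ≤ ‖lmulM P‖ + ‖rmulM Q‖ := norm_sub_le (lmulM P) (rmulM Q)
    _ ≤ ‖P‖ + ‖Q‖ := add_le_add (norm_lmulM_le P) (norm_rmulM_le Q)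
    _ ≤ u / 2 + u / 2 := add_le_add hPnorm hQnorm
    _ = u := by ring
  have hw1 : w 1 = ((-Complex.I) / 2) • Δ := by
    simp only [hw, ContinuousLinearMap.sub_apply, lmulM_apply, rmulM_apply, mul_one, one_mul,
      hP, hQ, hΔ]
    module
  have hw1norm : ‖w 1‖ = ‖Δ‖ / 2 := by
    rw [hw1, norm_smul, hnormI2]; ring
  -- exp of w applied to 1
  have hcomm : ∀ C D : Matrix (Fin n) (Fin n) ℂ, Commute (lmulM C) (rmulM D) :=
    commute_lmulM_rmulM
  have hexpw : ∀ C D : Matrix (Fin n) (Fin n) ℂ,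
      NormedSpace.exp (lmulM C - rmulM D) 1
        = NormedSpace.exp C * NormedSpace.exp (-D) := by
    intro C D
    have h1 : lmulM C - rmulM D = lmulM C + rmulM (-D) := by
      rw [rmulM_neg, ← sub_eq_add_neg]
    have h2 : Commute (lmulM C) (rmulM (-D)) := hcomm C (-D)
    rw [h1, NormedSpace.exp_add_of_commute (𝔸 := Matrix (Fin n) (Fin n) ℂ →L[ℂ] Matrix (Fin n) (Fin n) ℂ) h2, exp_lmulM, exp_rmulM]
    simp [ContinuousLinearMap.mul_apply]
  have hU : NormedSpace.exp w 1 = NormedSpace.exp P * NormedSpace.exp (-Q) := hexpw P Q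
  have hnegw : -w = lmulM (-P) - rmulM (-Q) := by
    rw [lmulM_neg, rmulM_neg, hw]
    abel
  have hV : NormedSpace.exp (-w) 1 = NormedSpace.exp (-P) * NormedSpace.exp Q := by
    rw [hnegw, hexpw (-P) (-Q), neg_neg]
  -- relate U - V to the exponential difference
  set A : Matrix (Fin n) (Fin n) ℂ := NormedSpace.exp ((-Complex.I) • J) with hA
  set B : Matrix (Fin n) (Fin n) ℂ := NormedSpace.exp ((-Complex.I) • K) with hB
  have hsmul_comm : ∀ (a b : ℂ) (C : Matrix (Fin n) (Fin n) ℂ),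
      Commute (a • C) (b • C) := by
    intro a b C
    exact ((Commute.refl C).smul_left a).smul_right b
  have hexp_comb : ∀ (a b : ℂ) (C : Matrix (Fin n) (Fin n) ℂ),
      NormedSpace.exp (a • C) * NormedSpace.exp (b • C)
        = NormedSpace.exp ((a + b) • C) := by
    intro a b C
    rw [← NormedSpace.exp_add_of_commute (hsmul_comm a b C), add_smul]
  have hJA : NormedSpace.exp ((Complex.I / 2) • J) * A = NormedSpace.exp P := by
    rw [hA, hexp_comb, hP]
    congr 2
    ring
  have hKB : B * NormedSpace.exp ((Complex.I / 2) • K) = NormedSpace.exp Q := by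
    rw [hB, hexp_comb, hQ]
    congr 2
    ring
  have hQ' : NormedSpace.exp ((Complex.I / 2) • K) = NormedSpace.exp (-Q) := by
    rw [hQ]; congr 1; module
  have hP' : NormedSpace.exp ((Complex.I / 2) • J) = NormedSpace.exp (-P) := by
    rw [hP]; congr 1; module
  have hUV : NormedSpace.exp w 1 - NormedSpace.exp (-w) 1
      = NormedSpace.exp ((Complex.I / 2) • J) * (A - B)
        * NormedSpace.exp ((Complex.I / 2) • K) := by
    rw [hU, hV, mul_sub, sub_mul]
    congr 1
    · rw [← hQ', ← hJA, mul_assoc]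
    · rw [← hP', mul_assoc, hKB]
  -- series expansion
  set f : ℕ → Matrix (Fin n) (Fin n) ℂ := fun k =>
    ((k !⁻¹ : ℂ) • w ^ k) 1 - ((k !⁻¹ : ℂ) • (-w) ^ k) 1 with hf
  have hsum1 : HasSum (fun k : ℕ => ((k !⁻¹ : ℂ) • w ^ k) 1) (NormedSpace.exp w 1) := by
    have := (ContinuousLinearMap.apply ℂ (Matrix (Fin n) (Fin n) ℂ) (1 : Matrix (Fin n) (Fin n) ℂ)).hasSum
      (NormedSpace.exp_series_hasSum_exp' (𝕂 := ℂ) w)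
    simpa using this
  have hsum2 : HasSum (fun k : ℕ => ((k !⁻¹ : ℂ) • (-w) ^ k) 1) (NormedSpace.exp (-w) 1) := by
    have := (ContinuousLinearMap.apply ℂ (Matrix (Fin n) (Fin n) ℂ) (1 : Matrix (Fin n) (Fin n) ℂ)).hasSum
      (NormedSpace.exp_series_hasSum_exp' (𝕂 := ℂ) (-w))
    simpa using this
  have hsumf : HasSum f (NormedSpace.exp w 1 - NormedSpace.exp (-w) 1) := hsum1.sub hsum2
  have hf0 : f 0 = 0 := by simp [hf]
  have hf1 : f 1 = (-Complex.I) • Δ := by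
    simp only [hf, pow_one, Nat.factorial_one, Nat.cast_one, inv_one, one_smul,
      ContinuousLinearMap.neg_apply]
    rw [hw1]
    module
  have hf2 : f 2 = 0 := by
    have h22 : (-w) ^ 2 = w ^ 2 := neg_sq w
    simp [hf, h22]
  have htail : ((-Complex.I) • Δ : Matrix (Fin n) (Fin n) ℂ)
      = (NormedSpace.exp w 1 - NormedSpace.exp (-w) 1) - ∑' k, f (k + 3) := by
    have h := Summable.sum_add_tsum_nat_add 3 hsumf.summable
    have hr : ∑ i ∈ Finset.range 3, f i = (-Complex.I) • Δ := by
      rw [Finset.sum_range_succ, Finset.sum_range_succ, Finset.sum_range_one, hf0, hf1, hf2]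
      simp
    rw [hsumf.tsum_eq, hr] at h
    exact (eq_sub_of_add_eq h)
  -- bound on tail terms
  have hterm : ∀ k : ℕ, ‖f (k + 3)‖ ≤ u ^ (k + 2) / (k + 3)! * ‖Δ‖ := by
    intro k
    have key : ∀ v : Matrix (Fin n) (Fin n) ℂ →L[ℂ] Matrix (Fin n) (Fin n) ℂ,
        ‖v‖ ≤ u → ‖v 1‖ = ‖Δ‖ / 2 → ‖(v ^ (k + 3)) 1‖ ≤ u ^ (k + 2) * (‖Δ‖ / 2) := by
      intro v hv hv1
      have h1 : (v ^ (k + 3)) 1 = (v ^ (k + 2)) (v 1) := by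
        rw [pow_succ]
        rfl
      rw [h1]
      calc ‖(v ^ (k + 2)) (v 1)‖ ≤ ‖v ^ (k + 2)‖ * ‖v 1‖ :=
            ContinuousLinearMap.le_opNorm _ _
      _ ≤ ‖v‖ ^ (k + 2) * (‖Δ‖ / 2) := by
          rw [hv1]
          exact mul_le_mul_of_nonneg_right (norm_pow_le' v (by omega)) (by positivity)
      _ ≤ u ^ (k + 2) * (‖Δ‖ / 2) := by
          exact mul_le_mul_of_nonneg_right (pow_le_pow_left₀ (norm_nonneg v) hv _)
            (by positivity)
    have hnw1 : ‖(-w) 1‖ = ‖Δ‖ / 2 := by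
      rw [ContinuousLinearMap.neg_apply, norm_neg, hw1norm]
    have hnwnorm : ‖(-w)‖ ≤ u := by rwa [norm_neg w]
    have b1 := key w hwnorm hw1norm
    have b2 := key (-w) hnwnorm hnw1
    have hcoef : ‖((k + 3)!⁻¹ : ℂ)‖ = ((k + 3)! : ℝ)⁻¹ := by
      rw [norm_inv]
      simp
    calc ‖f (k + 3)‖ ≤ ‖(((k + 3)!⁻¹ : ℂ) • w ^ (k + 3)) 1‖
          + ‖(((k + 3)!⁻¹ : ℂ) • (-w) ^ (k + 3)) 1‖ := norm_sub_le _ _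
    _ = ((k + 3)! : ℝ)⁻¹ * ‖(w ^ (k + 3)) 1‖
          + ((k + 3)! : ℝ)⁻¹ * ‖((-w) ^ (k + 3)) 1‖ := by
        simp only [ContinuousLinearMap.smul_apply, norm_smul, hcoef]
    _ ≤ ((k + 3)! : ℝ)⁻¹ * (u ^ (k + 2) * (‖Δ‖ / 2))
          + ((k + 3)! : ℝ)⁻¹ * (u ^ (k + 2) * (‖Δ‖ / 2)) := by
        have hpos : (0:ℝ) ≤ ((k + 3)! : ℝ)⁻¹ := by positivity
        exact add_le_add (mul_le_mul_of_nonneg_left b1 hpos)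
          (mul_le_mul_of_nonneg_left b2 hpos)
    _ = u ^ (k + 2) / (k + 3)! * ‖Δ‖ := by ring
  -- the real-valued comparison series
  have hexp_hasSum : HasSum (fun k : ℕ => u ^ k / k !) (Real.exp u) := by
    rw [Real.exp_eq_exp_ℝ]
    exact NormedSpace.expSeries_div_hasSum_exp u
  have hS3 : ∑ i ∈ Finset.range 3, u ^ i / i ! = 1 + u + u ^ 2 / 2 := by
    rw [Finset.sum_range_succ, Finset.sum_range_succ, Finset.sum_range_one]
    norm_num [Nat.factorial]
  set t : ℝ := Real.exp u - (1 + u + u ^ 2 / 2) with ht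
  have hune : u ≠ 0 := ne_of_gt hu0
  have hshift : HasSum (fun k : ℕ => u ^ (k + 3) / (k + 3)!) t := by
    have h2 : HasSum (fun k : ℕ => u ^ k / k !) (t + ∑ i ∈ Finset.range 3, u ^ i / i !) := by
      rw [hS3]
      convert hexp_hasSum using 1
      rw [ht]; ring
    exact (hasSum_nat_add_iff 3).2 h2
  have hgsum : HasSum (fun k : ℕ => u ^ (k + 2) / (k + 3)! * ‖Δ‖) (t / u * ‖Δ‖) := by
    have h := hshift.mul_right (‖Δ‖ / u)
    have he : (fun k : ℕ => u ^ (k + 3) / (k + 3)! * (‖Δ‖ / u))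
        = fun k : ℕ => u ^ (k + 2) / (k + 3)! * ‖Δ‖ := by
      funext k
      field_simp
      ring
    rw [he] at h
    have he2 : t / u * ‖Δ‖ = t * (‖Δ‖ / u) := by field_simp
    rw [he2]
    exact h
  have htail_norm : ‖∑' k, f (k + 3)‖ ≤ t / u * ‖Δ‖ :=
    tsum_of_norm_bounded hgsum hterm
  -- norm bound on U - V
  have hnormUV : ‖NormedSpace.exp w 1 - NormedSpace.exp (-w) 1‖ ≤ Real.exp u * ‖A - B‖ := by
    rw [hUV]
    have hJ2 : ‖NormedSpace.exp ((Complex.I / 2) • J)‖ ≤ Real.exp (u / 2) := by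
      refine (matrix_norm_exp_le _).trans (Real.exp_le_exp.2 ?_)
      rw [norm_smul]
      have : ‖(Complex.I / 2 : ℂ)‖ = 1 / 2 := by
        simp [norm_div]
      rw [this]; nlinarith [norm_nonneg J]
    have hK2 : ‖NormedSpace.exp ((Complex.I / 2) • K)‖ ≤ Real.exp (u / 2) := by
      refine (matrix_norm_exp_le _).trans (Real.exp_le_exp.2 ?_)
      rw [norm_smul]
      have : ‖(Complex.I / 2 : ℂ)‖ = 1 / 2 := by
        simp [norm_div]
      rw [this]; nlinarith [norm_nonneg K]
    calc ‖NormedSpace.exp ((Complex.I / 2) • J) * (A - B)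
          * NormedSpace.exp ((Complex.I / 2) • K)‖
        ≤ ‖NormedSpace.exp ((Complex.I / 2) • J) * (A - B)‖
          * ‖NormedSpace.exp ((Complex.I / 2) • K)‖ := norm_mul_le _ _
      _ ≤ ‖NormedSpace.exp ((Complex.I / 2) • J)‖ * ‖A - B‖
          * ‖NormedSpace.exp ((Complex.I / 2) • K)‖ := by
          exact mul_le_mul_of_nonneg_right (norm_mul_le _ _) (norm_nonneg _)
      _ ≤ Real.exp (u / 2) * ‖A - B‖ * Real.exp (u / 2) := by
          have h1 : (0:ℝ) ≤ ‖A - B‖ := norm_nonneg _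
          have h2 : (0:ℝ) ≤ ‖NormedSpace.exp ((Complex.I / 2) • J)‖ * ‖A - B‖ :=
            mul_nonneg (norm_nonneg _) h1
          refine mul_le_mul (mul_le_mul_of_nonneg_right hJ2 h1) hK2 (norm_nonneg _) ?_
          positivity
      _ = Real.exp u * ‖A - B‖ := by
          have h3 : Real.exp (u / 2) * Real.exp (u / 2) = Real.exp u := by
            rw [← Real.exp_add]; ring_nf
          rw [← h3]; ring
  -- main inequality
  have hmain : ‖Δ‖ ≤ Real.exp u * ‖A - B‖ + t / u * ‖Δ‖ := by
    have h1 : ‖((-Complex.I) • Δ : Matrix (Fin n) (Fin n) ℂ)‖ = ‖Δ‖ := by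
      rw [norm_smul]
      simp
    calc ‖Δ‖ = ‖((-Complex.I) • Δ : Matrix (Fin n) (Fin n) ℂ)‖ := h1.symm
    _ ≤ ‖NormedSpace.exp w 1 - NormedSpace.exp (-w) 1‖ + ‖∑' k, f (k + 3)‖ := by
        rw [htail]; exact norm_sub_le _ _
    _ ≤ Real.exp u * ‖A - B‖ + t / u * ‖Δ‖ := add_le_add hnormUV htail_norm
  -- numerics
  have hu_le1 : u ≤ 1 := hu1.le
  have habs : |u| ≤ 1 := by rw [abs_of_pos hu0]; exact hu_le1
  have hexp_ub : Real.exp u ≤ 1 + u + u ^ 2 / 2 + 2 / 9 * u ^ 3 := by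
    have h := Real.exp_bound habs (n := 3) (by norm_num)
    have h2 := (abs_sub_le_iff.1 h).1
    rw [hS3, abs_of_pos hu0] at h2
    have h3 : u ^ 3 * (Nat.succ 3 / ((3:ℕ)! * 3) : ℝ) = 2 / 9 * u ^ 3 := by
      norm_num [Nat.factorial]
      ring
    nlinarith [h2]
  have ht_ub : t ≤ 2 / 9 * u ^ 3 := by rw [ht]; linarith
  have ht_nonneg : 0 ≤ t := by
    rw [ht]
    have := Real.sum_le_exp_of_nonneg hu0.le 3
    rw [hS3] at this
    linarith
  have hxi : ξ = 1 - u := by rw [hu]; ring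
  clear_value u t
  have hkey : ξ * Real.exp u * u + t ≤ u := by
    rw [hxi]
    have hnn : (0:ℝ) ≤ (1 - u) * u := mul_nonneg (by linarith) hu0.le
    have hmul := mul_le_mul_of_nonneg_left hexp_ub hnn
    nlinarith [hmul, ht_ub, pow_nonneg hu0.le 3, pow_nonneg hu0.le 4, pow_nonneg hu0.le 5]
  have hd : 0 ≤ ‖Δ‖ := norm_nonneg _
  have hN : 0 ≤ ‖A - B‖ := norm_nonneg _
  have heu : 0 < Real.exp u := Real.exp_pos u
  have hdiv : u * (t / u) = t := by field_simp
  have hone : (u - t) * ‖Δ‖ ≤ u * Real.exp u * ‖A - B‖ := by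
    have h2 := mul_le_mul_of_nonneg_left hmain hu0.le
    have h3 : u * (t / u * ‖Δ‖) = t * ‖Δ‖ := by
      rw [← mul_assoc, hdiv]
    nlinarith [h2, h3]
  have hfinal : ξ * ‖Δ‖ ≤ ‖A - B‖ := by
    have h4 : ξ * Real.exp u * u * ‖Δ‖ ≤ (u - t) * ‖Δ‖ :=
      mul_le_mul_of_nonneg_right (by linarith [hkey]) hd
    have h5 : ξ * Real.exp u * u * ‖Δ‖ ≤ u * Real.exp u * ‖A - B‖ := h4.trans hone
    have h6 : 0 < u * Real.exp u := mul_pos hu0 heu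
    have h7 : (u * Real.exp u) * (ξ * ‖Δ‖) ≤ (u * Real.exp u) * ‖A - B‖ := by
      nlinarith [h5]
    exact le_of_mul_le_mul_left h7 h6
  rw [div_mul_eq_mul_div, one_mul, le_div_iff₀ hξ0]
  calc ‖J - K‖ * ξ = ξ * ‖Δ‖ := by rw [hΔ]; ring
  _ ≤ ‖A - B‖ := hfinal
end

section
/- For Hermitian matrices J, K and τ ≥ 0, the second-order Lie group commutator formula satisfies ‖e^{-iτJ} e^{-iτK} e^{iτJ} e^{iτK} − e^{-τ²[J,K]}‖ ≤ (τ³/2)‖[J,[J,K]]‖ + (τ³/2)‖[K,[K,J]]‖. -/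
open NormedSpace Set

set_option linter.unusedSectionVars false
set_option linter.unusedVariables false
set_option maxHeartbeats 1000000

section GC
variable {E : Type*} [NormedRing E] [StarRing E] [CStarRing E] [NormedAlgebra ℂ E]
  [CompleteSpace E] [StarModule ℝ E]

noncomputable instance gcRatAlg : NormedAlgebra ℚ E := NormedAlgebra.restrictScalars ℚ ℂ E

lemma gc_hasDerivAt_exp (x : E) (t : ℝ) :
    HasDerivAt (fun u : ℝ => exp (u • x)) (exp (t • x) * x) t := by
  have h := hasDerivAt_exp_smul_const (𝕂 := ℝ) x t
  exact h

lemma gc_exp_unitary {x : E} (hx : star x = -x) : exp x ∈ unitary E :=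
  exp_mem_unitary_of_mem_skewAdjoint (skewAdjoint.mem_iff.mpr hx)

lemma gc_skew_smul {x : E} (hx : star x = -x) (t : ℝ) : star (t • x) = -(t • x) := by
  rw [star_smul, star_trivial, hx, smul_neg]

lemma gc_exp_mul_exp_neg (x : E) : exp x * exp (-x) = 1 := by
  rw [← exp_add_of_commute (Commute.refl x).neg_right, add_neg_cancel, exp_zero]

lemma gc_exp_neg_mul_exp (x : E) : exp (-x) * exp x = 1 := by
  rw [← exp_add_of_commute (Commute.refl x).neg_left, neg_add_cancel, exp_zero]

lemma gc_exp_comm (x : E) (t : ℝ) : exp (t • x) * x = x * exp (t • x) :=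
  ((Commute.refl x).smul_left t).exp_left

lemma gc_norm_unit_mul {u : E} (hu : u ∈ unitary E) (x : E) : ‖u * x‖ = ‖x‖ :=
  CStarRing.norm_mem_unitary_mul x hu

lemma gc_norm_mul_unit {u : E} (hu : u ∈ unitary E) (x : E) : ‖x * u‖ = ‖x‖ :=
  CStarRing.norm_mul_mem_unitary x hu

/-- derivative of the conjugation `s ↦ e^{sD} X e^{-sD}`. -/
lemma gc_hasDerivAt_conj (D X : E) (s : ℝ) :
    HasDerivAt (fun s : ℝ => exp (s • D) * X * exp (s • (-D)))
      (exp (s • D) * (D * X - X * D) * exp (s • (-D))) s := by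
  have h1 := (gc_hasDerivAt_exp D s).mul_const X
  have h := h1.mul (gc_hasDerivAt_exp (-D) s)
  convert h using 1
  · rfl
  have hc : exp (s • (-D)) * (-D) = (-D) * exp (s • (-D)) := gc_exp_comm (-D) s
  rw [hc]
  noncomm_ring

/-- unitarity bound on conjugation difference. -/
lemma gc_conj_sub_le (D X : E) (hD : star D = -D) :
    ‖exp D * X * exp (-D) - X‖ ≤ ‖D * X - X * D‖ := by
  set g : ℝ → E := fun s => exp (s • D) * X * exp (s • (-D)) with hg
  have hd : ∀ s : ℝ, HasDerivAt g
      (exp (s • D) * (D * X - X * D) * exp (s • (-D))) s :=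
    fun s => gc_hasDerivAt_conj D X s
  have hD' : star (-D) = -(-D) := by rw [star_neg, hD, neg_neg]
  have key := norm_image_sub_le_of_norm_deriv_right_le_segment
    (f := g) (a := 0) (b := 1)
    (fun s _ => (hd s).continuousAt.continuousWithinAt)
    (fun s _ => (hd s).hasDerivWithinAt)
    (C := ‖D * X - X * D‖) ?_ 1 ⟨zero_le_one, le_rfl⟩
  · have hg1 : g 1 = exp D * X * exp (-D) := by simp [hg, one_smul]
    have hg0 : g 0 = X := by simp [hg]
    rw [hg1, hg0] at key
    simpa using key
  · intro s _
    rw [gc_norm_mul_unit (gc_exp_unitary (gc_skew_smul hD' s)),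
      gc_norm_unit_mul (gc_exp_unitary (gc_skew_smul hD s))]

/-- first order Taylor bound for the conjugation. -/
lemma gc_taylor (A B : E) (hA : star A = -A) {t : ℝ} (ht : 0 ≤ t) :
    ‖exp (t • A) * B * exp (t • (-A)) - B - t • (A * B - B * A)‖ ≤
      t ^ 2 / 2 * ‖A * (A * B - B * A) - (A * B - B * A) * A‖ := by
  set c : E := A * B - B * A with hc
  set nrm : ℝ := ‖A * c - c * A‖ with hnrm
  set φ : ℝ → E := fun s => exp (s • A) * B * exp (s • (-A)) - B - s • c with hφ
  have hd : ∀ s : ℝ, HasDerivAt φ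
      (exp (s • A) * c * exp (s • (-A)) - c) s := by
    intro s
    have h1 := gc_hasDerivAt_conj A B s
    have h2 : HasDerivAt (fun s : ℝ => B + s • c) c s := by
      simpa using (hasDerivAt_id s).smul_const c |>.const_add B
    convert h1.sub h2 using 1
    · ext x; simp [hφ, sub_sub]
    · ext x; simp [hφ, sub_sub]
  have hbound : ∀ s ∈ Ico (0:ℝ) t, ‖exp (s • A) * c * exp (s • (-A)) - c‖ ≤ s * nrm := by
    intro s hs
    have h := gc_conj_sub_le (s • A) c (gc_skew_smul hA s)
    have hsm : exp (-(s • A)) = exp (s • (-A)) := by rw [smul_neg]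
    rw [hsm] at h
    calc ‖exp (s • A) * c * exp (s • (-A)) - c‖ ≤ ‖(s • A) * c - c * (s • A)‖ := h
      _ = ‖s • (A * c - c * A)‖ := by rw [smul_mul_assoc, mul_smul_comm, ← smul_sub]
      _ = |s| * nrm := by rw [norm_smul, Real.norm_eq_abs]
      _ = s * nrm := by rw [abs_of_nonneg hs.1]
  have hB : ∀ s : ℝ, HasDerivAt (fun s : ℝ => s ^ 2 / 2 * nrm) (s * nrm) s := by
    intro s
    have := ((hasDerivAt_pow 2 s).div_const 2).mul_const nrm
    refine this.congr_deriv ?_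
    ring
  have key := image_norm_le_of_norm_deriv_right_le_deriv_boundary
    (f := φ) (a := 0) (b := t)
    (fun s _ => (hd s).continuousAt.continuousWithinAt)
    (fun s _ => (hd s).hasDerivWithinAt)
    (B := fun s => s ^ 2 / 2 * nrm) (B' := fun s => s * nrm) ?_ hB
    (fun s hs => hbound s hs) (x := t) ⟨ht, le_rfl⟩
  · simpa [hφ] using key
  · simp [hφ, norm_zero]

/-- Pure algebra: factorization of the derivative. -/
lemma gc_factor {R : Type*} [Ring R] [Module ℝ R] [SMulCommClass ℝ R R] [IsScalarTower ℝ R R]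
    (A B c u1 u2 u3 u4 u5 q : R) (t : ℝ)
    (c14 : u1 * u4 = 1) (c41 : u4 * u1 = 1) (c25 : u2 * u5 = 1) (c52 : u5 * u2 = 1)
    (c3q : u3 * q = 1) (cq3 : q * u3 = 1)
    (mA4 : A * u4 = u4 * A) (mA1 : A * u1 = u1 * A)
    (mB5 : B * u5 = u5 * B) (mB2 : B * u2 = u2 * B)
    (mc3 : c * u3 = u3 * c) (mcq : c * q = q * c) :
    ((((u1 * (-A)) * u2 + u1 * (u2 * (-B))) * u3 + (u1 * u2) * ((-(2*t)) • (u3 * c))) * u4 +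
        (u1 * u2 * u3) * (u4 * A)) * u5 + (u1 * u2 * u3 * u4) * (u5 * B) =
      u1 * (u2 * (u3 * ((-(q * (u5 * (A * (u2 * u3)))) + -(q * (B * u3)) + (-(2*t)) • c + A +
        u4 * (B * u1)) * (u4 * u5)))) := by
  have h14 : ∀ z : R, u1 * (u4 * z) = z := fun z => by rw [← mul_assoc, c14, one_mul]
  have h41 : ∀ z : R, u4 * (u1 * z) = z := fun z => by rw [← mul_assoc, c41, one_mul]
  have h25 : ∀ z : R, u2 * (u5 * z) = z := fun z => by rw [← mul_assoc, c25, one_mul]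
  have h52 : ∀ z : R, u5 * (u2 * z) = z := fun z => by rw [← mul_assoc, c52, one_mul]
  have h3q : ∀ z : R, u3 * (q * z) = z := fun z => by rw [← mul_assoc, c3q, one_mul]
  have hq3 : ∀ z : R, q * (u3 * z) = z := fun z => by rw [← mul_assoc, cq3, one_mul]
  have kA4 : ∀ z : R, A * (u4 * z) = u4 * (A * z) := fun z => by
    rw [← mul_assoc, mA4, mul_assoc]
  have kA1 : ∀ z : R, A * (u1 * z) = u1 * (A * z) := fun z => by
    rw [← mul_assoc, mA1, mul_assoc]
  have kB5 : ∀ z : R, B * (u5 * z) = u5 * (B * z) := fun z => by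
    rw [← mul_assoc, mB5, mul_assoc]
  have kB2 : ∀ z : R, B * (u2 * z) = u2 * (B * z) := fun z => by
    rw [← mul_assoc, mB2, mul_assoc]
  have kc3 : ∀ z : R, c * (u3 * z) = u3 * (c * z) := fun z => by
    rw [← mul_assoc, mc3, mul_assoc]
  have kcq : ∀ z : R, c * (q * z) = q * (c * z) := fun z => by
    rw [← mul_assoc, mcq, mul_assoc]
  simp only [mul_assoc, mul_add, add_mul, mul_neg, neg_mul, smul_mul_assoc, mul_smul_comm,
    mul_one, one_mul, h14, h41, h25, h52, h3q, hq3, kA4, kA1, kB5, kB2, kc3, kcq,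
    c14, c41, c25, c52, c3q, cq3, mA4, mA1, mB5, mB2, mc3, mcq]

/-- Pure algebra: decomposition of the reduced derivative. -/
lemma gc_split {R : Type*} [Ring R] [Module ℝ R] [SMulCommClass ℝ R R] [IsScalarTower ℝ R R]
    (A B c u1 u2 u3 u4 u5 q : R) (t : ℝ)
    (hc : c = A * B - B * A)
    (c14 : u1 * u4 = 1) (c41 : u4 * u1 = 1) (c25 : u2 * u5 = 1) (c52 : u5 * u2 = 1)
    (c3q : u3 * q = 1) (cq3 : q * u3 = 1)
    (mA4 : A * u4 = u4 * A) (mA1 : A * u1 = u1 * A)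
    (mB5 : B * u5 = u5 * B) (mB2 : B * u2 = u2 * B)
    (mc3 : c * u3 = u3 * c) (mcq : c * q = q * c) :
    -(q * (u5 * (A * (u2 * u3)))) + -(q * (B * u3)) + (-(2*t)) • c + A + u4 * (B * u1) =
      (u4 * B * u1 - B - t • c) - (q * B * u3 - B) -
        q * ((u5 * A * u2 - A - t • (B * A - A * B)) * u3) - (q * A * u3 - A) := by
  have h3q : ∀ z : R, u3 * (q * z) = z := fun z => by rw [← mul_assoc, c3q, one_mul]
  have hq3 : ∀ z : R, q * (u3 * z) = z := fun z => by rw [← mul_assoc, cq3, one_mul]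
  have kc3 : ∀ z : R, c * (u3 * z) = u3 * (c * z) := fun z => by
    rw [← mul_assoc, mc3, mul_assoc]
  have hba : B * A - A * B = -c := by rw [hc]; abel
  have h2t : (-(2*t)) • c = -(t • c + t • c) := by
    rw [show (-(2*t)) = -(t + t) by ring, neg_smul, add_smul]
  have hqc3 : q * (c * u3) = c := by rw [mc3, ← mul_assoc, cq3, one_mul]
  rw [hba, h2t]
  simp only [mul_sub, sub_mul, mul_neg, neg_mul, smul_mul_assoc, mul_smul_comm, mul_assoc,
    hq3, h3q, kc3, hqc3, cq3, c3q, mul_one, one_mul, smul_neg, neg_neg]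
  abel

lemma gc_main (A B : E) (hA : star A = -A) (hB : star B = -B) :
    ‖exp A * exp B * exp (-A) * exp (-B) - exp (A * B - B * A)‖ ≤
      ‖A * (A * B - B * A) - (A * B - B * A) * A‖ / 2 +
        ‖B * (B * A - A * B) - (B * A - A * B) * B‖ / 2 := by
  set c : E := A * B - B * A with hc
  set a : ℝ := ‖A * c - c * A‖ with ha
  set b : ℝ := ‖B * (B * A - A * B) - (B * A - A * B) * B‖ with hb
  have hc' : star c = -c := by
    rw [hc, star_sub, star_mul, star_mul, hA, hB]
    simp only [neg_mul, mul_neg, neg_neg, neg_sub]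
  have hnA : star (-A) = -(-A) := by rw [star_neg, hA]
  have hnB : star (-B) = -(-B) := by rw [star_neg, hB]
  -- the comparison function
  set f : ℝ → E := fun t => exp (t • (-A)) * exp (t • (-B)) * exp ((-t^2) • c) *
      exp (t • A) * exp (t • B) with hfdef
  set Dv : ℝ → E := fun t =>
      ((((exp (t • (-A)) * (-A)) * exp (t • (-B)) +
            exp (t • (-A)) * (exp (t • (-B)) * (-B))) * exp ((-t^2) • c) +
          (exp (t • (-A)) * exp (t • (-B))) * ((-(2*t)) • (exp ((-t^2) • c) * c))) *
            exp (t • A) +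
          (exp (t • (-A)) * exp (t • (-B)) * exp ((-t^2) • c)) * (exp (t • A) * A)) *
            exp (t • B) +
        (exp (t • (-A)) * exp (t • (-B)) * exp ((-t^2) • c) * exp (t • A)) *
          (exp (t • B) * B) with hDv
  have hf : ∀ t : ℝ, HasDerivAt f (Dv t) t := by
    intro t
    have h3 : HasDerivAt (fun t : ℝ => exp ((-t^2) • c))
        ((-(2*t)) • (exp ((-t^2) • c) * c)) t := by
      have inner : HasDerivAt (fun t : ℝ => -t^2) (-(2*t)) t := by
        exact (hasDerivAt_pow 2 t).neg.congr_deriv (by norm_num)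
      simpa [Function.comp_def] using
        HasDerivAt.scomp (x := t) (gc_hasDerivAt_exp c (-t^2)) inner
    exact ((((gc_hasDerivAt_exp (-A) t).mul (gc_hasDerivAt_exp (-B) t)).mul h3).mul
        (gc_hasDerivAt_exp A t)).mul (gc_hasDerivAt_exp B t)
  -- bound on the derivative
  have hDbound : ∀ t : ℝ, 0 ≤ t → ‖Dv t‖ ≤ 3 * (a + b) / 2 * t ^ 2 := by
    intro t ht0
    set u1 : E := exp (t • (-A)) with hu1
    set u2 : E := exp (t • (-B)) with hu2
    set u3 : E := exp ((-t^2) • c) with hu3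
    set u4 : E := exp (t • A) with hu4
    set u5 : E := exp (t • B) with hu5
    set q : E := exp ((t^2) • c) with hq
    have e1 : t • (-A) = -(t • A) := smul_neg t A
    have e2 : t • (-B) = -(t • B) := smul_neg t B
    have e3 : (-t^2) • c = -((t^2) • c) := neg_smul (t^2) c
    have p14 : u1 * u4 = 1 := by rw [hu1, hu4, e1]; exact gc_exp_neg_mul_exp _
    have p41 : u4 * u1 = 1 := by rw [hu1, hu4, e1]; exact gc_exp_mul_exp_neg _
    have p25 : u2 * u5 = 1 := by rw [hu2, hu5, e2]; exact gc_exp_neg_mul_exp _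
    have p52 : u5 * u2 = 1 := by rw [hu2, hu5, e2]; exact gc_exp_mul_exp_neg _
    have p3q : u3 * q = 1 := by rw [hu3, hq, e3]; exact gc_exp_neg_mul_exp _
    have pq3 : q * u3 = 1 := by rw [hu3, hq, e3]; exact gc_exp_mul_exp_neg _
    have mA4 : A * u4 = u4 * A := (gc_exp_comm A t).symm
    have mB5 : B * u5 = u5 * B := (gc_exp_comm B t).symm
    have mc3 : c * u3 = u3 * c := (gc_exp_comm c (-t^2)).symm
    have mcq : c * q = q * c := (gc_exp_comm c (t^2)).symm
    have mA1 : A * u1 = u1 * A := by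
      have h := gc_exp_comm (-A) t
      rw [mul_neg, neg_mul] at h
      exact (neg_inj.mp h).symm
    have mB2 : B * u2 = u2 * B := by
      have h := gc_exp_comm (-B) t
      rw [mul_neg, neg_mul] at h
      exact (neg_inj.mp h).symm
    have hU1 : u1 ∈ unitary E := gc_exp_unitary (gc_skew_smul hnA t)
    have hU2 : u2 ∈ unitary E := gc_exp_unitary (gc_skew_smul hnB t)
    have hU3 : u3 ∈ unitary E := gc_exp_unitary (gc_skew_smul hc' (-t^2))
    have hU4 : u4 ∈ unitary E := gc_exp_unitary (gc_skew_smul hA t)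
    have hU5 : u5 ∈ unitary E := gc_exp_unitary (gc_skew_smul hB t)
    have hUq : q ∈ unitary E := gc_exp_unitary (gc_skew_smul hc' (t^2))
    have hfact := gc_factor A B c u1 u2 u3 u4 u5 q t p14 p41 p25 p52 p3q pq3
      mA4 mA1 mB5 mB2 mc3 mcq
    have hsplit := gc_split A B c u1 u2 u3 u4 u5 q t hc p14 p41 p25 p52 p3q pq3
      mA4 mA1 mB5 mB2 mc3 mcq
    have hP1 : ‖u4 * B * u1 - B - t • c‖ ≤ t ^ 2 / 2 * a := by
      have h := gc_taylor A B hA ht0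
      rw [← hc, ← ha] at h
      exact h
    have hP2 : ‖q * B * u3 - B‖ ≤ t ^ 2 * b := by
      have h := gc_conj_sub_le ((t^2) • c) B (gc_skew_smul hc' (t^2))
      rw [← e3] at h
      calc ‖q * B * u3 - B‖ ≤ ‖(t^2) • c * B - B * ((t^2) • c)‖ := h
        _ = ‖(t^2) • (c * B - B * c)‖ := by rw [smul_mul_assoc, mul_smul_comm, ← smul_sub]
        _ = t ^ 2 * ‖c * B - B * c‖ := by
            rw [norm_smul, Real.norm_eq_abs, abs_of_nonneg (sq_nonneg t)]
        _ = t ^ 2 * b := by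
            congr 1
            rw [hb]
            congr 1
            rw [hc]
            noncomm_ring
    have hP4 : ‖q * A * u3 - A‖ ≤ t ^ 2 * a := by
      have h := gc_conj_sub_le ((t^2) • c) A (gc_skew_smul hc' (t^2))
      rw [← e3] at h
      calc ‖q * A * u3 - A‖ ≤ ‖(t^2) • c * A - A * ((t^2) • c)‖ := h
        _ = ‖(t^2) • (c * A - A * c)‖ := by rw [smul_mul_assoc, mul_smul_comm, ← smul_sub]
        _ = t ^ 2 * ‖c * A - A * c‖ := by
            rw [norm_smul, Real.norm_eq_abs, abs_of_nonneg (sq_nonneg t)]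
        _ = t ^ 2 * a := by rw [show c * A - A * c = -(A * c - c * A) by abel, norm_neg, ha]
    have hQ3 : ‖q * ((u5 * A * u2 - A - t • (B * A - A * B)) * u3)‖ ≤ t ^ 2 / 2 * b := by
      rw [gc_norm_unit_mul hUq, gc_norm_mul_unit hU3]
      have h := gc_taylor B A hB ht0
      rw [← hb] at h
      exact h
    have hEt : ‖Dv t‖ = ‖-(q * (u5 * (A * (u2 * u3)))) + -(q * (B * u3)) + (-(2*t)) • c + A +
        u4 * (B * u1)‖ := by
      rw [hDv]
      simp only [← hu1, ← hu2, ← hu3, ← hu4, ← hu5]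
      rw [hfact]
      rw [gc_norm_unit_mul hU1, gc_norm_unit_mul hU2, gc_norm_unit_mul hU3,
        gc_norm_mul_unit (mul_mem hU4 hU5)]
    calc ‖Dv t‖ = ‖(u4 * B * u1 - B - t • c) - (q * B * u3 - B) -
          q * ((u5 * A * u2 - A - t • (B * A - A * B)) * u3) - (q * A * u3 - A)‖ := by
          rw [hEt, hsplit]
      _ ≤ ‖(u4 * B * u1 - B - t • c) - (q * B * u3 - B) -
          q * ((u5 * A * u2 - A - t • (B * A - A * B)) * u3)‖ + ‖q * A * u3 - A‖ :=
          norm_sub_le _ _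
      _ ≤ (‖(u4 * B * u1 - B - t • c) - (q * B * u3 - B)‖ +
          ‖q * ((u5 * A * u2 - A - t • (B * A - A * B)) * u3)‖) + ‖q * A * u3 - A‖ := by
          gcongr; exact norm_sub_le _ _
      _ ≤ ((‖u4 * B * u1 - B - t • c‖ + ‖q * B * u3 - B‖) +
          ‖q * ((u5 * A * u2 - A - t • (B * A - A * B)) * u3)‖) + ‖q * A * u3 - A‖ := by
          gcongr; exact norm_sub_le _ _
      _ ≤ ((t ^ 2 / 2 * a + t ^ 2 * b) + t ^ 2 / 2 * b) + t ^ 2 * a := by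
          gcongr <;> assumption
      _ = 3 * (a + b) / 2 * t ^ 2 := by ring
  -- integrate
  have hBd : ∀ t : ℝ, HasDerivAt (fun t : ℝ => (a + b) / 2 * t ^ 3) (3 * (a + b) / 2 * t ^ 2) t := by
    intro t
    have := (hasDerivAt_pow 3 t).const_mul ((a + b) / 2)
    refine this.congr_deriv ?_
    push_cast
    ring
  have hf0 : f 0 = 1 := by
    rw [hfdef]
    norm_num
  have key := image_norm_le_of_norm_deriv_right_le_deriv_boundary
    (f := fun t => f t - 1) (a := 0) (b := 1) (f' := Dv)
    (fun t _ => ((hf t).sub_const 1).continuousAt.continuousWithinAt)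
    (fun t _ => ((hf t).sub_const 1).hasDerivWithinAt)
    (B := fun t => (a + b) / 2 * t ^ 3) (B' := fun t => 3 * (a + b) / 2 * t ^ 2)
    (by simp [hf0]) hBd
    (fun t htm => hDbound t htm.1) (x := 1) ⟨zero_le_one, le_rfl⟩
  have hkey : ‖f 1 - 1‖ ≤ (a + b) / 2 := by simpa using key
  -- convert to the goal
  have hUA : exp A ∈ unitary E := gc_exp_unitary hA
  have hUB : exp B ∈ unitary E := gc_exp_unitary hB
  have hUnA : exp (-A) ∈ unitary E := gc_exp_unitary hnA
  have hUnB : exp (-B) ∈ unitary E := gc_exp_unitary hnB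
  have hUnc : exp (-c) ∈ unitary E := gc_exp_unitary (by rw [star_neg, hc'])
  have haa : exp (-A) * exp A = 1 := gc_exp_neg_mul_exp A
  have hbbp : exp (-B) * exp B = 1 := gc_exp_neg_mul_exp B
  have hbb : ∀ z : E, exp (-B) * (exp B * z) = z := fun z => by
    rw [← mul_assoc, hbbp, one_mul]
  have hcc : ∀ z : E, exp (-c) * (exp c * z) = z := fun z => by
    rw [← mul_assoc, gc_exp_neg_mul_exp c, one_mul]
  have hXU : (exp A * exp B * exp (-A) * exp (-B) - exp c) * (exp B * exp A) =
      exp A * exp B - exp c * (exp B * exp A) := by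
    simp only [sub_mul, mul_assoc, hbb, haa, mul_one]
  have hf1 : f 1 - 1 = exp (-A) * (exp (-B) * (exp (-c) *
      (exp A * exp B - exp c * (exp B * exp A)))) := by
    have h1 : f 1 = exp (-A) * exp (-B) * exp (-c) * exp A * exp B := by
      rw [hfdef]
      norm_num
    rw [h1]
    simp only [mul_sub, mul_assoc, hcc, hbb, haa, mul_one]
  calc ‖exp A * exp B * exp (-A) * exp (-B) - exp c‖
      = ‖(exp A * exp B * exp (-A) * exp (-B) - exp c) * (exp B * exp A)‖ :=
        (gc_norm_mul_unit (mul_mem hUB hUA) _).symm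
    _ = ‖exp A * exp B - exp c * (exp B * exp A)‖ := by rw [hXU]
    _ = ‖f 1 - 1‖ := by
        rw [hf1, gc_norm_unit_mul hUnA, gc_norm_unit_mul hUnB, gc_norm_unit_mul hUnc]
    _ ≤ (a + b) / 2 := hkey
    _ = a / 2 + b / 2 := by ring

end GC


open NormedSpace in
/-- Commutator error bound for the second-order Lie group commutator
product formula: for Hermitian `J`, `K` and `τ ≥ 0`,
`‖e^{-iτJ} e^{-iτK} e^{iτJ} e^{iτK} − e^{-τ²[J,K]}‖
  ≤ (τ³/2)‖[J,[J,K]]‖ + (τ³/2)‖[K,[K,J]]‖`. -/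
theorem group_commutator_second_order_bound {n : ℕ} (J K : Matrix (Fin n) (Fin n) ℂ)
    (hJ : J.IsHermitian) (hK : K.IsHermitian) (τ : ℝ) (hτ : 0 ≤ τ) :
    ‖exp ((-Complex.I * τ) • J) * exp ((-Complex.I * τ) • K) *
        exp ((Complex.I * τ) • J) * exp ((Complex.I * τ) • K) -
      exp ((-(τ : ℂ) ^ 2) • (J * K - K * J))‖ ≤
    τ ^ 3 / 2 * ‖J * (J * K - K * J) - (J * K - K * J) * J‖ +
      τ ^ 3 / 2 * ‖K * (K * J - J * K) - (K * J - J * K) * K‖ := by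
  letI : CStarRing (Matrix (Fin n) (Fin n) ℂ) := Matrix.instCStarRing
  set A : Matrix (Fin n) (Fin n) ℂ := (-Complex.I * τ) • J with hAdef
  set B : Matrix (Fin n) (Fin n) ℂ := (-Complex.I * τ) • K with hBdef
  have hsc : star (-Complex.I * (τ:ℂ)) = -(-Complex.I * (τ:ℂ)) := by
    simp [Complex.ext_iff]
  have hJs : star J = J := hJ
  have hKs : star K = K := hK
  have hA : star A = -A := by
    rw [hAdef, star_smul, hJs, hsc, neg_smul]
  have hB : star B = -B := by
    rw [hBdef, star_smul, hKs, hsc, neg_smul]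
  have e1 : (Complex.I * (τ:ℂ)) • J = -A := by
    rw [hAdef, ← neg_smul]
    congr 1
    ring
  have e2 : (Complex.I * (τ:ℂ)) • K = -B := by
    rw [hBdef, ← neg_smul]
    congr 1
    ring
  have hs : (-Complex.I * (τ:ℂ)) * (-Complex.I * τ) = -(τ:ℂ)^2 := by
    rw [show (-Complex.I * (τ:ℂ)) * (-Complex.I * τ) = Complex.I^2 * τ^2 from by ring,
      Complex.I_sq]
    ring
  have e3 : A * B - B * A = (-(τ:ℂ)^2) • (J * K - K * J) := by
    rw [hAdef, hBdef, smul_mul_smul_comm, smul_mul_smul_comm, hs, smul_sub]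
  have key := gc_main A B hA hB
  rw [e3] at key
  -- rewrite the two nested-commutator norms
  have hnest1 : A * ((-(τ:ℂ)^2) • (J * K - K * J)) - ((-(τ:ℂ)^2) • (J * K - K * J)) * A
      = (Complex.I * (τ:ℂ)^3) • (J * (J * K - K * J) - (J * K - K * J) * J) := by
    rw [hAdef, smul_mul_smul_comm, smul_mul_smul_comm, smul_sub]
    rw [show (-Complex.I * (τ:ℂ)) * (-(τ:ℂ)^2) = Complex.I * τ^3 from by ring,
      show (-(τ:ℂ)^2) * (-Complex.I * τ) = Complex.I * τ^3 from by ring]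
  have e3' : B * A - A * B = (-(τ:ℂ)^2) • (K * J - J * K) := by
    rw [hAdef, hBdef, smul_mul_smul_comm, smul_mul_smul_comm, hs, smul_sub]
  have hnest2 : B * (B * A - A * B) - (B * A - A * B) * B
      = (Complex.I * (τ:ℂ)^3) • (K * (K * J - J * K) - (K * J - J * K) * K) := by
    rw [e3', hBdef, smul_mul_smul_comm, smul_mul_smul_comm, smul_sub]
    rw [show (-Complex.I * (τ:ℂ)) * (-(τ:ℂ)^2) = Complex.I * τ^3 from by ring,
      show (-(τ:ℂ)^2) * (-Complex.I * τ) = Complex.I * τ^3 from by ring]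
  rw [hnest2] at key
  rw [hnest1] at key
  have hIτ : ‖(Complex.I * (τ:ℂ)^3)‖ = τ^3 := by
    simp [norm_mul, abs_of_nonneg hτ]
  rw [norm_smul, norm_smul, hIτ] at key
  rw [e1, e2]
  refine key.trans (le_of_eq (by ring))
end

section
/- If Γ_R and Γ_I are normal matrices satisfying Γ_RΓ_I = −Γ_IΓ_R, Γ_R²Γ_I = Γ_I, and Γ_I²Γ_R = Γ_R, then Γ_R² = Γ_I², Γ_R³ = Γ_R, and Γ_I³ = Γ_I; in particular both Γ_R and Γ_I are Hermitian with all eigenvalues in {−1, 0, 1}. -/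
open Matrix

open scoped Matrix.Norms.L2Operator in
noncomputable instance matrixCStarAux {n : ℕ} : CStarAlgebra (Matrix (Fin n) (Fin n) ℂ) := {}

lemma cube_aux {n : ℕ} (A : Matrix (Fin n) (Fin n) ℂ)
    (hnorm : A * Aᴴ = Aᴴ * A) (h3 : A * A * A = A) :
    A.IsHermitian ∧ ∀ z ∈ spectrum ℂ A, z = -1 ∨ z = 0 ∨ z = 1 := by
  have haev : (Polynomial.aeval A) (Polynomial.X ^ 3 - Polynomial.X : Polynomial ℂ) = 0 := by
    rw [map_sub, map_pow, Polynomial.aeval_X]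
    rw [pow_succ, pow_two, h3, sub_self]
  have hspec : ∀ z ∈ spectrum ℂ A, z = -1 ∨ z = 0 ∨ z = 1 := by
    intro z hz
    have hmem : z ^ 3 - z ∈ spectrum ℂ ((0 : Matrix (Fin n) (Fin n) ℂ)) := by
      have := spectrum.subset_polynomial_aeval A
        (Polynomial.X ^ 3 - Polynomial.X : Polynomial ℂ) (Set.mem_image_of_mem _ hz)
      rw [haev] at this
      simpa using this
    have h30 : z ^ 3 - z = 0 := by
      by_contra hne
      rw [spectrum.mem_iff, sub_zero] at hmem
      exact hmem ((isUnit_iff_ne_zero.mpr hne).map (algebraMap ℂ (Matrix (Fin n) (Fin n) ℂ)))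
    have hfac : (z + 1) * z * (z - 1) = 0 := by linear_combination h30
    rcases mul_eq_zero.mp hfac with h | h
    · rcases mul_eq_zero.mp h with h | h
      · exact Or.inl (by linear_combination h)
      · exact Or.inr (Or.inl h)
    · exact Or.inr (Or.inr (by linear_combination h))
  have hsn : IsStarNormal A := ⟨by simpa [Matrix.star_eq_conjTranspose, Commute, SemiconjBy] using hnorm.symm⟩
  refine ⟨?_, hspec⟩
  have hrestrict : SpectrumRestricts A Complex.reCLM := by
    refine SpectrumRestricts.of_subset_range_algebraMap (fun x => Complex.ofReal_re x) ?_
    intro z hz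
    rcases hspec z hz with rfl | rfl | rfl
    · exact ⟨-1, by simp⟩
    · exact ⟨0, by simp⟩
    · exact ⟨1, by simp⟩
  exact hrestrict.isSelfAdjoint A

/-- If normal matrices `Γ_R`, `Γ_I` satisfy `Γ_RΓ_I = −Γ_IΓ_R`,
`Γ_R²Γ_I = Γ_I`, and `Γ_I²Γ_R = Γ_R`, then `Γ_R² = Γ_I²`, `Γ_R³ = Γ_R`, `Γ_I³ = Γ_I`;
in particular both are Hermitian with all eigenvalues in `{−1, 0, 1}`. -/
theorem anticommuting_pair_cubes {n : ℕ} (ΓR ΓI : Matrix (Fin n) (Fin n) ℂ)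
    (hR : ΓR * ΓRᴴ = ΓRᴴ * ΓR) (hI : ΓI * ΓIᴴ = ΓIᴴ * ΓI)
    (hanti : ΓR * ΓI = -(ΓI * ΓR))
    (h1 : ΓR * ΓR * ΓI = ΓI) (h2 : ΓI * ΓI * ΓR = ΓR) :
    ΓR * ΓR = ΓI * ΓI ∧ ΓR * ΓR * ΓR = ΓR ∧ ΓI * ΓI * ΓI = ΓI ∧
      ΓR.IsHermitian ∧ ΓI.IsHermitian ∧
      (∀ z ∈ spectrum ℂ ΓR, z = -1 ∨ z = 0 ∨ z = 1) ∧
      (∀ z ∈ spectrum ℂ ΓI, z = -1 ∨ z = 0 ∨ z = 1) := by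
  have cR : ΓR * (ΓR * ΓI) = ΓI * ΓR * ΓR := by
    rw [hanti, mul_neg, ← mul_assoc, hanti, neg_mul, neg_neg, mul_assoc]

  have hcomm : ΓR * ΓR * ΓI = ΓI * (ΓR * ΓR) := by
    rw [mul_assoc, cR, mul_assoc]
  have hsq : ΓR * ΓR = ΓI * ΓI := by
    calc ΓR * ΓR = ΓI * ΓI * ΓR * ΓR := by rw [h2]
      _ = ΓI * ΓI * (ΓR * ΓR) := by rw [mul_assoc]
      _ = ΓI * (ΓI * (ΓR * ΓR)) := by rw [mul_assoc]
      _ = ΓI * (ΓR * ΓR * ΓI) := by rw [hcomm]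
      _ = ΓI * ΓI := by rw [h1]
  have hR3 : ΓR * ΓR * ΓR = ΓR := by rw [hsq, h2]
  have hI3 : ΓI * ΓI * ΓI = ΓI := by rw [← hsq, h1]
  obtain ⟨hRh, hRs⟩ := cube_aux ΓR hR hR3
  obtain ⟨hIh, hIs⟩ := cube_aux ΓI hI hI3
  exact ⟨hsq, hR3, hI3, hRh, hIh, hRs, hIs⟩
end

section
/- For any matrix A with singular value decomposition A = UΣV†, the Hamiltonian block encoding factors as exp(−i[[0, A†],[A, 0]]) = diag(V, U) · [[cos Σ, −i sin Σ],[−i sin Σ, cos Σ]] · diag(V†, U†). -/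
open Matrix

/-- For `A = UΣV†` a singular value decomposition (with `U`, `V` unitary
and `Σ = diag(σ)` nonnegative), the Hamiltonian block encoding factors as
`exp(−i[[0,A†],[A,0]]) = diag(V,U) · [[cos Σ, −i sin Σ],[−i sin Σ, cos Σ]] · diag(V†,U†)`. -/
theorem hamiltonian_block_encoding_svd_factorization {n : ℕ}
    (A U V : Matrix (Fin n) (Fin n) ℂ) (σ : Fin n → ℝ)
    (hU : U ∈ Matrix.unitaryGroup (Fin n) ℂ) (hV : V ∈ Matrix.unitaryGroup (Fin n) ℂ)
    (hσ : ∀ i, 0 ≤ σ i)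
    (hA : A = U * Matrix.diagonal (fun i => (σ i : ℂ)) * Vᴴ) :
    NormedSpace.exp ((-Complex.I) • Matrix.fromBlocks 0 Aᴴ A 0) =
      Matrix.fromBlocks V 0 0 U *
        Matrix.fromBlocks
          (Matrix.diagonal fun i => (Real.cos (σ i) : ℂ))
          (Matrix.diagonal fun i => -Complex.I * (Real.sin (σ i) : ℂ))
          (Matrix.diagonal fun i => -Complex.I * (Real.sin (σ i) : ℂ))
          (Matrix.diagonal fun i => (Real.cos (σ i) : ℂ)) *
        Matrix.fromBlocks Vᴴ 0 0 Uᴴ := by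
  set D : Matrix (Fin n) (Fin n) ℂ := Matrix.diagonal (fun i => (σ i : ℂ)) with hD
  set P : Matrix (Fin n ⊕ Fin n) (Fin n ⊕ Fin n) ℂ := Matrix.fromBlocks V 0 0 U with hP
  have hVV : V * Vᴴ = 1 := hV.2
  have hUU : U * Uᴴ = 1 := hU.2
  have hVV' : Vᴴ * V = 1 := hV.1
  have hUU' : Uᴴ * U = 1 := hU.1
  have hPinvmul : P * Matrix.fromBlocks Vᴴ 0 0 Uᴴ = 1 := by
    simp [hP, Matrix.fromBlocks_multiply, hVV, hUU, ← Matrix.fromBlocks_one]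
  have hPinvmul' : Matrix.fromBlocks Vᴴ 0 0 Uᴴ * P = 1 := by
    simp [hP, Matrix.fromBlocks_multiply, hVV', hUU', ← Matrix.fromBlocks_one]
  have hPunit : IsUnit P := ⟨⟨P, _, hPinvmul, hPinvmul'⟩, rfl⟩
  have hPinv : P⁻¹ = Matrix.fromBlocks Vᴴ 0 0 Uᴴ := Matrix.inv_eq_right_inv hPinvmul
  have hDH : Dᴴ = D := by
    ext i j
    simp only [hD, Matrix.conjTranspose_apply, Matrix.diagonal_apply]
    split_ifs with h1 h2 <;> simp_all [Complex.conj_ofReal, eq_comm]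
  have claim1 : (-Complex.I) • Matrix.fromBlocks 0 Aᴴ A 0
      = P * ((-Complex.I) • Matrix.fromBlocks 0 D D 0) * P⁻¹ := by
    rw [hPinv, Matrix.mul_smul, Matrix.smul_mul]
    congr 1
    have hAH : Aᴴ = V * D * Uᴴ := by
      rw [hA]
      simp [Matrix.conjTranspose_mul, hDH, Matrix.mul_assoc]
    rw [hP, hAH, hA]
    simp [Matrix.fromBlocks_multiply, Matrix.mul_assoc, Matrix.conjTranspose_mul, hDH]
  set Q : Matrix (Fin n ⊕ Fin n) (Fin n ⊕ Fin n) ℂ := Matrix.fromBlocks 1 1 1 (-1) with hQ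
  have hQQ : Q * Q = (2:ℂ) • 1 := by
    rw [hQ]
    rw [Matrix.fromBlocks_multiply, ← Matrix.fromBlocks_one, Matrix.fromBlocks_smul]
    congr 1 <;> simp <;> module
  have hQinvmul : Q * ((2:ℂ)⁻¹ • Q) = 1 := by
    rw [mul_smul_comm, hQQ, smul_smul]; norm_num
  have hQinvmul' : ((2:ℂ)⁻¹ • Q) * Q = 1 := by
    rw [smul_mul_assoc, hQQ, smul_smul]; norm_num
  have hQunit : IsUnit Q := ⟨⟨Q, _, hQinvmul, hQinvmul'⟩, rfl⟩
  have hQinv : Q⁻¹ = (2:ℂ)⁻¹ • Q := Matrix.inv_eq_right_inv hQinvmul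
  set d : Fin n ⊕ Fin n → ℂ :=
    Sum.elim (fun i => -Complex.I * σ i) (fun i => Complex.I * σ i) with hd
  have claim2 : (-Complex.I) • Matrix.fromBlocks 0 D D 0 = Q * Matrix.diagonal d * Q⁻¹ := by
    rw [hQinv, hd, ← Matrix.fromBlocks_diagonal, hQ, mul_smul_comm, Matrix.fromBlocks_multiply,
      Matrix.fromBlocks_multiply, Matrix.fromBlocks_smul, Matrix.fromBlocks_smul]
    ext i j
    rcases i with i|i <;> rcases j with j|j <;>
      simp [hD, Matrix.diagonal_apply] <;> split_ifs <;> ring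
  have hde : (fun x => NormedSpace.exp (d x)) =
      Sum.elim (fun i => (Real.cos (σ i) : ℂ) - Complex.I * Real.sin (σ i))
        (fun i => (Real.cos (σ i) : ℂ) + Complex.I * Real.sin (σ i)) := by
    funext x
    have key : ∀ r : ℝ, Complex.exp (-Complex.I * r) = (Real.cos r : ℂ) - Complex.I * Real.sin r := by
      intro r
      rw [Complex.ofReal_cos, Complex.ofReal_sin,
        show -Complex.I * (r:ℂ) = (-(r:ℂ)) * Complex.I by ring, Complex.exp_mul_I]
      simp [Complex.cos_neg, Complex.sin_neg]; ring
    have key' : ∀ r : ℝ, Complex.exp (Complex.I * r) = (Real.cos r : ℂ) + Complex.I * Real.sin r := by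
      intro r
      rw [Complex.ofReal_cos, Complex.ofReal_sin,
        show Complex.I * (r:ℂ) = ((r:ℂ)) * Complex.I by ring, Complex.exp_mul_I]
      ring
    rcases x with i|i <;> simp only [hd, Sum.elim_inl, Sum.elim_inr, ← Complex.exp_eq_exp_ℂ]
    · exact key (σ i)
    · exact key' (σ i)
  have claim3 : Q * Matrix.diagonal (fun x => NormedSpace.exp (d x)) * Q⁻¹ =
      Matrix.fromBlocks
          (Matrix.diagonal fun i => (Real.cos (σ i) : ℂ))
          (Matrix.diagonal fun i => -Complex.I * (Real.sin (σ i) : ℂ))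
          (Matrix.diagonal fun i => -Complex.I * (Real.sin (σ i) : ℂ))
          (Matrix.diagonal fun i => (Real.cos (σ i) : ℂ)) := by
    rw [hQinv, hde, ← Matrix.fromBlocks_diagonal, hQ, mul_smul_comm, Matrix.fromBlocks_multiply,
      Matrix.fromBlocks_multiply, Matrix.fromBlocks_smul]
    ext i j
    rcases i with i|i <;> rcases j with j|j <;>
      simp [Matrix.diagonal_apply] <;> split_ifs <;> ring
  calc NormedSpace.exp ((-Complex.I) • Matrix.fromBlocks 0 Aᴴ A 0)
      = P * NormedSpace.exp ((-Complex.I) • Matrix.fromBlocks 0 D D 0) * P⁻¹ := by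
        rw [claim1, Matrix.exp_conj P _ hPunit]
    _ = P * (Q * NormedSpace.exp (Matrix.diagonal d) * Q⁻¹) * P⁻¹ := by
        rw [claim2, Matrix.exp_conj Q _ hQunit]
    _ = _ := by
        rw [Matrix.exp_diagonal]
        rw [Pi.exp_def, claim3, hPinv, hP]
end

section
/- For a Hermitian dilation H_A = [[0, A†],[A, 0]] with SVD A = UΣV†, conjugating the exponential by iX⊗I on the ancilla yields exp(−i H_A)·(iX⊗I) = diag(V,U) · [[sin Σ, i cos Σ],[i cos Σ, sin Σ]] · diag(U†, V†). -/
open Matrix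

open Complex

/-- For the Hermitian dilation `H_A = [[0,A†],[A,0]]` with SVD `A = UΣV†`,
`exp(−iH_A)·(iX⊗I) = diag(V,U) · [[sin Σ, i cos Σ],[i cos Σ, sin Σ]] · diag(U†,V†)`. -/
theorem hamiltonian_block_encoding_shifted_factorization {n : ℕ}
    (A U V : Matrix (Fin n) (Fin n) ℂ) (σ : Fin n → ℝ)
    (hU : U ∈ Matrix.unitaryGroup (Fin n) ℂ) (hV : V ∈ Matrix.unitaryGroup (Fin n) ℂ)
    (hσ : ∀ i, 0 ≤ σ i)
    (hA : A = U * Matrix.diagonal (fun i => (σ i : ℂ)) * Vᴴ) :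
    NormedSpace.exp ((-Complex.I) • Matrix.fromBlocks 0 Aᴴ A 0) *
        (Complex.I • Matrix.fromBlocks 0 1 1 0) =
      Matrix.fromBlocks V 0 0 U *
        Matrix.fromBlocks
          (Matrix.diagonal fun i => (Real.sin (σ i) : ℂ))
          (Matrix.diagonal fun i => Complex.I * (Real.cos (σ i) : ℂ))
          (Matrix.diagonal fun i => Complex.I * (Real.cos (σ i) : ℂ))
          (Matrix.diagonal fun i => (Real.sin (σ i) : ℂ)) *
        Matrix.fromBlocks Uᴴ 0 0 Vᴴ := by
  have hUU : U * Uᴴ = 1 := (Matrix.mem_unitaryGroup_iff.mp hU)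
  have hVV : V * Vᴴ = 1 := (Matrix.mem_unitaryGroup_iff.mp hV)
  have hUU' : Uᴴ * U = 1 := (Matrix.mem_unitaryGroup_iff'.mp hU)
  have hVV' : Vᴴ * V = 1 := (Matrix.mem_unitaryGroup_iff'.mp hV)
  set Sg : Matrix (Fin n) (Fin n) ℂ := Matrix.diagonal (fun i => (σ i : ℂ)) with hSg
  have hAH : Aᴴ = V * Sg * Uᴴ := by
    rw [hA]
    simp [Matrix.conjTranspose_mul, hSg, Matrix.diagonal_conjTranspose, Matrix.mul_assoc,
      Pi.star_def]
  set c : ℂ := (((Real.sqrt 2 : ℝ) : ℂ))⁻¹ with hc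
  have h2 : ((Real.sqrt 2 : ℝ) : ℂ) * ((Real.sqrt 2 : ℝ) : ℂ) = 2 := by
    norm_cast
    rw [Real.mul_self_sqrt] <;> norm_num
  have hc2 : c * c = (2 : ℂ)⁻¹ := by rw [hc, ← mul_inv, h2]
  have hcstar : star c = c := by
    simp [hc, ← Complex.ofReal_inv]
  set F : Matrix (Fin n ⊕ Fin n) (Fin n ⊕ Fin n) ℂ := Matrix.fromBlocks V V U (-U) with hF
  set P : Matrix (Fin n ⊕ Fin n) (Fin n ⊕ Fin n) ℂ := c • F with hP
  have hPH : Pᴴ = c • Matrix.fromBlocks Vᴴ Uᴴ Vᴴ (-Uᴴ) := by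
    rw [hP, Matrix.conjTranspose_smul, hcstar, hF, Matrix.fromBlocks_conjTranspose]
    simp
  have h1 : P * Pᴴ = 1 := by
    rw [hPH, hP, Matrix.smul_mul, Matrix.mul_smul, smul_smul, hc2, hF,
      Matrix.fromBlocks_multiply]
    simp [hUU, hVV]
    have h11 : (1 + 1 : Matrix (Fin n) (Fin n) ℂ) = (2 : ℂ) • 1 := by
      rw [two_smul]
    rw [h11, show ((0 : Matrix (Fin n) (Fin n) ℂ)) = (2 : ℂ) • 0 from (smul_zero _).symm,
      ← Matrix.fromBlocks_smul, smul_smul]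
    norm_num [Matrix.fromBlocks_one]
  have hunit : IsUnit P := (Matrix.isUnit_iff_isUnit_det P).mpr (Matrix.isUnit_det_of_right_inverse h1)
  have hinv : P⁻¹ = Pᴴ := Matrix.inv_eq_right_inv h1
  set d : Fin n ⊕ Fin n → ℂ :=
    Sum.elim (fun i => -Complex.I * σ i) (fun i => Complex.I * σ i) with hd
  have hdiag : Matrix.diagonal d =
      Matrix.fromBlocks ((-Complex.I) • Sg) 0 0 (Complex.I • Sg) := by
    rw [hd, ← Matrix.fromBlocks_diagonal, hSg, ← Matrix.diagonal_smul, ← Matrix.diagonal_smul]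
    rfl
  have hH : (-Complex.I) • Matrix.fromBlocks 0 Aᴴ A 0 = P * Matrix.diagonal d * P⁻¹ := by
    rw [hinv, hPH, hdiag, hP, Matrix.smul_mul, Matrix.mul_smul, Matrix.smul_mul, smul_smul,
      hc2, hF, Matrix.fromBlocks_multiply, Matrix.fromBlocks_multiply]
    rw [hAH, hA]
    simp only [Matrix.mul_smul, Matrix.smul_mul, Matrix.mul_zero, Matrix.zero_mul,
      Matrix.mul_neg, Matrix.neg_mul, smul_neg, neg_neg, add_zero, zero_add, neg_zero,
      smul_zero, Matrix.mul_assoc]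
    rw [Matrix.fromBlocks_smul, Matrix.fromBlocks_smul]
    refine Matrix.fromBlocks_inj.mpr ⟨?_, ?_, ?_, ?_⟩ <;> match_scalars <;> ring_nf <;>
    simp [Complex.I_sq]
  have hexp : NormedSpace.exp d =
      Sum.elim (fun i => (Real.cos (σ i) : ℂ) - Complex.I * Real.sin (σ i))
        (fun i => (Real.cos (σ i) : ℂ) + Complex.I * Real.sin (σ i)) := by
    funext k
    rw [Pi.exp_def]
    cases k with
    | inl i =>
      simp only [hd, Sum.elim_inl]
      rw [← Complex.exp_eq_exp_ℂ,
        show -Complex.I * (σ i : ℂ) = ((-σ i : ℝ) : ℂ) * Complex.I by push_cast; ring,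
        Complex.exp_mul_I]
      push_cast
      rw [Complex.cos_neg, Complex.sin_neg]
      ring
    | inr i =>
      simp only [hd, Sum.elim_inr]
      rw [← Complex.exp_eq_exp_ℂ,
        show Complex.I * (σ i : ℂ) = ((σ i : ℝ) : ℂ) * Complex.I by push_cast; ring,
        Complex.exp_mul_I]
      push_cast [← Complex.ofReal_cos, ← Complex.ofReal_sin]
      ring
  set Cm : Matrix (Fin n) (Fin n) ℂ := Matrix.diagonal (fun i => (Real.cos (σ i) : ℂ)) with hCm
  set Sm : Matrix (Fin n) (Fin n) ℂ := Matrix.diagonal (fun i => (Real.sin (σ i) : ℂ)) with hSm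
  have hE : Matrix.diagonal (NormedSpace.exp d) =
      Matrix.fromBlocks (Cm - Complex.I • Sm) 0 0 (Cm + Complex.I • Sm) := by
    rw [hexp, ← Matrix.fromBlocks_diagonal]
    refine Matrix.fromBlocks_inj.mpr ⟨?_, rfl, rfl, ?_⟩
    · rw [hCm, hSm, ← Matrix.diagonal_smul, ← Matrix.diagonal_sub]
      simp [Pi.smul_def, smul_eq_mul]
    · rw [hCm, hSm, ← Matrix.diagonal_smul, ← Matrix.diagonal_add]
      simp [Pi.smul_def, smul_eq_mul]
  have hRdiag : (Matrix.diagonal fun i => Complex.I * (Real.cos (σ i) : ℂ)) =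
      Complex.I • Cm := by
    rw [hCm, ← Matrix.diagonal_smul]
    simp [Pi.smul_def, smul_eq_mul]
  rw [hH, Matrix.exp_conj P (Matrix.diagonal d) hunit, Matrix.exp_diagonal, hinv, hPH, hE,
    hP, hF, hRdiag]
  have key : ∀ M : Matrix (Fin n ⊕ Fin n) (Fin n ⊕ Fin n) ℂ,
      (c • Matrix.fromBlocks V V U (-U)) * M * (c • Matrix.fromBlocks Vᴴ Uᴴ Vᴴ (-Uᴴ)) =
      (2 : ℂ)⁻¹ • (Matrix.fromBlocks V V U (-U) * M * Matrix.fromBlocks Vᴴ Uᴴ Vᴴ (-Uᴴ)) := by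
    intro M
    rw [Matrix.smul_mul, Matrix.smul_mul, Matrix.mul_smul, smul_smul, hc2]
  rw [key, Matrix.smul_mul, Matrix.mul_smul, smul_smul]
  rw [Matrix.fromBlocks_multiply, Matrix.fromBlocks_multiply, Matrix.fromBlocks_multiply,
    Matrix.fromBlocks_multiply, Matrix.fromBlocks_multiply]
  simp only [Matrix.mul_smul, Matrix.smul_mul, Matrix.mul_zero, Matrix.zero_mul,
    Matrix.mul_neg, Matrix.neg_mul, smul_neg, neg_neg, add_zero, zero_add, neg_zero,
    smul_zero, Matrix.mul_assoc, Matrix.mul_one, Matrix.one_mul, Matrix.mul_add,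
    Matrix.mul_sub, Matrix.add_mul, Matrix.sub_mul, smul_add, smul_sub]
  rw [Matrix.fromBlocks_smul]
  refine Matrix.fromBlocks_inj.mpr ⟨?_, ?_, ?_, ?_⟩ <;> match_scalars <;> ring_nf <;>
    simp [Complex.I_sq]
end

section
/- Let f be a real polynomial of degree d. Then for any b > 1, the maximum of |f| on [−b, b] is bounded by cosh(√(2(b−1))·d) times the maximum of |f| on [−1, 1]. -/
open Polynomial Finset Real


lemma natDegree_T_le : ∀ n : ℕ, (Polynomial.Chebyshev.T ℝ (n : ℤ)).natDegree ≤ n := by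
  intro n
  induction n using Nat.strong_induction_on with
  | _ n ih =>
    match n with
    | 0 => simp [Polynomial.Chebyshev.T_zero]
    | 1 => simp [Polynomial.Chebyshev.T_one]
    | (m+2) =>
      have h : ((m:ℤ)+2) = (m:ℤ) + 2 := rfl
      have e : Polynomial.Chebyshev.T ℝ ((m+2 : ℕ) : ℤ)
          = 2 * X * Polynomial.Chebyshev.T ℝ ((m:ℤ)+1) - Polynomial.Chebyshev.T ℝ (m:ℤ) := by
        push_cast
        exact Polynomial.Chebyshev.T_add_two ℝ (m:ℤ)
      rw [e]
      refine le_trans (natDegree_sub_le _ _) ?_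
      have h1 : (Polynomial.Chebyshev.T ℝ ((m:ℤ)+1)).natDegree ≤ m+1 := by
        have := ih (m+1) (by omega); push_cast at this ⊢; exact this
      have h2 : (Polynomial.Chebyshev.T ℝ (m:ℤ)).natDegree ≤ m := ih m (by omega)
      have h3 : (2 * X * Polynomial.Chebyshev.T ℝ ((m:ℤ)+1)).natDegree ≤ m + 2 := by
        refine le_trans (natDegree_mul_le) ?_
        have : (2 * X : ℝ[X]).natDegree ≤ 1 := le_trans natDegree_mul_le (by simp)
        omega
      omega

lemma T_real_cosh (t : ℝ) : ∀ n : ℕ, (Polynomial.Chebyshev.T ℝ (n : ℤ)).eval (Real.cosh t) = Real.cosh (n * t) := by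
  intro n
  induction n using Nat.strong_induction_on with
  | _ n ih =>
    match n with
    | 0 => simp [Polynomial.Chebyshev.T_zero]
    | 1 => simp [Polynomial.Chebyshev.T_one]
    | (m+2) =>
      have e : Polynomial.Chebyshev.T ℝ ((m+2 : ℕ) : ℤ)
          = 2 * X * Polynomial.Chebyshev.T ℝ ((m+1 : ℕ) : ℤ) - Polynomial.Chebyshev.T ℝ ((m : ℕ) : ℤ) := by
        push_cast
        exact Polynomial.Chebyshev.T_add_two ℝ (m:ℤ)
      rw [e]
      simp only [eval_sub, eval_mul, eval_ofNat, eval_X, ih (m+1) (by omega), ih m (by omega)]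
      have h1 := Real.cosh_add ((m+1) * t) t
      have h2 := Real.cosh_sub ((m+1) * t) t
      have e1 : ((m+2 : ℕ) : ℝ) * t = (m+1) * t + t := by push_cast; ring
      have e2 : ((m : ℕ) : ℝ) * t = (m+1) * t - t := by push_cast; ring
      have e3 : ((m+1 : ℕ) : ℝ) * t = ((m:ℝ)+1) * t := by push_cast; ring
      rw [e1, e2, e3, h1, h2]
      ring

lemma key (f : ℝ[X]) (d : ℕ) (hd1 : 1 ≤ d) (hd : f.natDegree ≤ d)
    (M : ℝ) (hM : ∀ y : ℝ, |y| ≤ 1 → |f.eval y| ≤ M)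
    (x u : ℝ) (hx1 : 1 < x) (hxB : x ≤ Real.cosh u) :
    |f.eval x| ≤ Real.cosh ((d : ℝ) * u) * M := by
  set B := Real.cosh u with hBdef
  have hB1 : 1 < B := lt_of_lt_of_le hx1 hxB
  have hd0 : (0:ℝ) < d := by exact_mod_cast hd1
  set s : Finset ℕ := Finset.range (d+1) with hs
  set v : ℕ → ℝ := fun k => Real.cos (k * π / d) with hv
  have hM0 : 0 ≤ M := le_trans (abs_nonneg _) (hM 0 (by norm_num))
  have hangle : ∀ k ∈ s, (k:ℝ) * π / d ∈ Set.Icc 0 π := by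
    intro k hk
    have hk' : k ≤ d := Nat.lt_succ_iff.mp (Finset.mem_range.mp hk)
    constructor
    · positivity
    · rw [div_le_iff₀ hd0]
      have : (k:ℝ) ≤ d := by exact_mod_cast hk'
      nlinarith [Real.pi_pos]
  have hinj : Set.InjOn v s := by
    intro j hj k hk h
    have h2 := Real.injOn_cos (hangle j hj) (hangle k hk) h
    rw [div_left_inj' hd0.ne', mul_left_inj' Real.pi_ne_zero] at h2
    exact_mod_cast h2
  have hanti : ∀ j k : ℕ, j < k → k ∈ s → v k < v j := by
    intro j k hjk hk
    have hj : j ∈ s := by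
      simp only [hs, Finset.mem_range] at hk ⊢; omega
    refine Real.strictAntiOn_cos (hangle j hj) (hangle k hk) ?_
    have : (j:ℝ) < k := by exact_mod_cast hjk
    have := Real.pi_pos
    apply div_lt_div_of_pos_right ?_ hd0 <;> nlinarith
  have hvle : ∀ k, v k ≤ 1 := fun k => Real.cos_le_one _
  have hvabs : ∀ k, |v k| ≤ 1 := fun k => Real.abs_cos_le_one _
  set L : ℕ → ℝ → ℝ := fun k t => (Lagrange.basis s v k).eval t with hL
  have hLeval : ∀ k t, L k t = ∏ j ∈ s.erase k, ((v k - v j)⁻¹ * (t - v j)) := by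
    intro k t
    simp [hL, Lagrange.basis, Lagrange.basisDivisor, eval_prod]
  have habs : ∀ k t, 1 < t → |L k t| = ∏ j ∈ s.erase k, (|v k - v j|⁻¹ * (t - v j)) := by
    intro k t ht
    rw [hLeval, abs_prod]
    refine Finset.prod_congr rfl fun j _ => ?_
    have h1 : (0:ℝ) < t - v j := by have := hvle j; linarith
    rw [abs_mul, abs_inv, abs_of_pos h1]
  have hmono : ∀ k, |L k x| ≤ |L k B| := by
    intro k
    rw [habs k x hx1, habs k B hB1]
    refine Finset.prod_le_prod (fun j _ => ?_) (fun j _ => ?_)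
    · have h1 : (0:ℝ) < x - v j := by have := hvle j; linarith
      positivity
    · have h2 : x - v j ≤ B - v j := by linarith
      exact mul_le_mul_of_nonneg_left h2 (by positivity)
  have hsign : ∀ k ∈ s, (-1:ℝ)^k * L k B = |L k B| := by
    intro k hk
    have hk' : k ≤ d := Nat.lt_succ_iff.mp (Finset.mem_range.mp hk)
    have hsplit : s.erase k = Finset.range k ∪ Finset.Ico (k+1) (d+1) := by
      ext j
      simp only [hs, Finset.mem_erase, Finset.mem_range, Finset.mem_union, Finset.mem_Ico]
      omega
    have hdisj : Disjoint (Finset.range k) (Finset.Ico (k+1) (d+1)) := by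
      rw [Finset.disjoint_left]
      intro j hj hj'
      simp only [Finset.mem_range] at hj
      simp only [Finset.mem_Ico] at hj'
      omega
    rw [habs k B hB1, hLeval, hsplit, Finset.prod_union hdisj, Finset.prod_union hdisj]
    have e1 : ∏ j ∈ Finset.range k, ((v k - v j)⁻¹ * (B - v j))
        = (-1:ℝ)^k * ∏ j ∈ Finset.range k, (|v k - v j|⁻¹ * (B - v j)) := by
      have : ∀ j ∈ Finset.range k, (v k - v j)⁻¹ * (B - v j)
          = (-1) * (|v k - v j|⁻¹ * (B - v j)) := by
        intro j hj
        have hjk : j < k := Finset.mem_range.mp hj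
        have hlt : v k < v j := hanti j k hjk hk
        rw [abs_of_neg (by linarith : v k - v j < 0), inv_neg]
        ring
      rw [Finset.prod_congr rfl this, Finset.prod_mul_distrib, Finset.prod_const,
        Finset.card_range]
    have e2 : ∏ j ∈ Finset.Ico (k+1) (d+1), ((v k - v j)⁻¹ * (B - v j))
        = ∏ j ∈ Finset.Ico (k+1) (d+1), (|v k - v j|⁻¹ * (B - v j)) := by
      refine Finset.prod_congr rfl fun j hj => ?_
      have hj' := Finset.mem_Ico.mp hj
      have hlt : v j < v k := hanti k j (by omega) (by simp [hs, Finset.mem_range]; omega)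
      rw [abs_of_pos (by linarith : 0 < v k - v j)]
    rw [e1, e2]
    have h11 : ((-1:ℝ)^k) * ((-1:ℝ)^k) = 1 := by
      rw [← pow_add]
      exact Even.neg_one_pow ⟨k, rfl⟩
    rw [← mul_assoc, ← mul_assoc, h11, one_mul]
  have hcard : #s = d + 1 := Finset.card_range _
  have hdegf : f.degree < (#s : WithBot ℕ) := by
    rw [hcard]
    refine lt_of_le_of_lt Polynomial.degree_le_natDegree ?_
    exact_mod_cast Nat.lt_succ_of_le hd
  have hf := Lagrange.eq_interpolate hinj hdegf
  have hx_eval : f.eval x = ∑ k ∈ s, f.eval (v k) * L k x := by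
    conv_lhs => rw [hf]
    rw [Lagrange.interpolate_apply, Polynomial.eval_finset_sum]
    exact Finset.sum_congr rfl fun k _ => by rw [eval_mul, eval_C]
  have hTdeg : (Polynomial.Chebyshev.T ℝ (d:ℤ)).degree < (#s : WithBot ℕ) := by
    rw [hcard]
    refine lt_of_le_of_lt Polynomial.degree_le_natDegree ?_
    exact_mod_cast Nat.lt_succ_of_le (natDegree_T_le d)
  have hTnodes : ∀ k ∈ s, (Polynomial.Chebyshev.T ℝ (d:ℤ)).eval (v k) = (-1:ℝ)^k := by
    intro k _
    have h2 := Polynomial.Chebyshev.T_real_cos ((k:ℝ) * π / d) (d:ℤ)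
    have harg : ((d:ℤ):ℝ) * ((k:ℝ) * π / d) = (k:ℝ) * π := by
      push_cast
      field_simp
    rw [harg] at h2
    have h3 := Real.cos_nat_mul_pi_sub 0 k
    simp only [sub_zero, Real.cos_zero, mul_one] at h3
    show (Polynomial.Chebyshev.T ℝ (d:ℤ)).eval (Real.cos ((k:ℝ) * π / d)) = (-1:ℝ)^k
    rw [h2, h3]
  have hT := Lagrange.eq_interpolate_of_eval_eq (fun k => (-1:ℝ)^k) hinj hTdeg hTnodes
  have hTB : Real.cosh ((d:ℝ) * u) = ∑ k ∈ s, (-1:ℝ)^k * L k B := by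
    have h4 := congrArg (Polynomial.eval B) hT
    rw [Lagrange.interpolate_apply, Polynomial.eval_finset_sum] at h4
    have h5 : (Polynomial.Chebyshev.T ℝ (d:ℤ)).eval B = Real.cosh ((d:ℝ) * u) := by
      rw [hBdef, T_real_cosh u d]
    rw [← h5, h4]
    exact Finset.sum_congr rfl fun k _ => by rw [eval_mul, eval_C]
  calc |f.eval x| ≤ ∑ k ∈ s, |f.eval (v k) * L k x| := by
        rw [hx_eval]; exact Finset.abs_sum_le_sum_abs _ _
    _ ≤ ∑ k ∈ s, M * |L k B| := by
        refine Finset.sum_le_sum fun k _ => ?_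
        rw [abs_mul]
        exact mul_le_mul (hM _ (hvabs k)) (hmono k) (abs_nonneg _) hM0
    _ = Real.cosh ((d:ℝ) * u) * M := by
        rw [← Finset.mul_sum, ← Finset.sum_congr rfl hsign, ← hTB]
        ring

/-- A real polynomial of degree `d` bounded by `M` on `[−1,1]` is bounded
by `cosh(√(2(b−1))·d)·M` on `[−b,b]`, for any `b > 1`. -/
theorem polynomial_growth_cosh_bound (f : Polynomial ℝ) (d : ℕ) (hd : f.natDegree ≤ d)
    (b : ℝ) (hb : 1 < b) (M : ℝ) (hM : ∀ y : ℝ, |y| ≤ 1 → |f.eval y| ≤ M) :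
    ∀ x : ℝ, |x| ≤ b →
      |f.eval x| ≤ Real.cosh (Real.sqrt (2 * (b - 1)) * d) * M := by
  intro x hx
  have hM0 : 0 ≤ M := le_trans (abs_nonneg _) (hM 0 (by norm_num))
  have hcosh1 : 1 ≤ Real.cosh (Real.sqrt (2*(b-1)) * d) := Real.one_le_cosh _
  by_cases hx1 : |x| ≤ 1
  · exact le_trans (hM x hx1) (le_mul_of_one_le_left hM0 hcosh1)
  push_neg at hx1
  rcases Nat.eq_zero_or_pos d with hd0 | hd1
  · have hdeg0 : f.natDegree = 0 := by omega
    obtain ⟨c, hc⟩ := Polynomial.natDegree_eq_zero.mp hdeg0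
    have h0 := hM 0 (by norm_num)
    rw [← hc] at h0 ⊢
    simp only [Polynomial.eval_C] at h0 ⊢
    exact le_trans h0 (le_mul_of_one_le_left hM0 hcosh1)
  · set u := Real.sqrt (2*(b-1)) with hu
    have hu0 : 0 < u := Real.sqrt_pos.mpr (by linarith)
    have hbB : b ≤ Real.cosh u := by
      have h2 := Real.cosh_two_mul (u/2)
      have h3 := Real.cosh_sq (u/2)
      have he : (2:ℝ) * (u/2) = u := by ring
      rw [he] at h2
      have h4 : u/2 ≤ Real.sinh (u/2) := le_of_lt (Real.self_lt_sinh_iff.mpr (by linarith))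
      have h6 : u^2 = 2*(b-1) := Real.sq_sqrt (by linarith)
      nlinarith
    rcases le_or_gt 0 x with hxpos | hxneg
    · have hxe : x = |x| := (abs_of_nonneg hxpos).symm
      have h := key f d hd1 hd M hM x u (by rwa [hxe]) (le_trans (by rwa [hxe]) hbB)
      calc |f.eval x| ≤ Real.cosh ((d:ℝ) * u) * M := h
        _ = Real.cosh (u * d) * M := by rw [mul_comm ((d:ℝ)) u]
    · set g := f.comp (-Polynomial.X) with hg
      have hgdeg : g.natDegree ≤ d := by
        rw [hg, Polynomial.natDegree_comp]
        simpa using hd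
      have hgeval : ∀ y : ℝ, g.eval y = f.eval (-y) := by
        intro y; simp [hg, Polynomial.eval_comp]
      have hgM : ∀ y : ℝ, |y| ≤ 1 → |g.eval y| ≤ M := by
        intro y hy; rw [hgeval]; exact hM (-y) (by rwa [abs_neg])
      have hx' : 1 < -x := by rwa [abs_of_neg hxneg] at hx1
      have hxb : -x ≤ Real.cosh u := le_trans (by rwa [abs_of_neg hxneg] at hx) hbB
      have h := key g d hd1 hgdeg M hgM (-x) u hx' hxb
      rw [hgeval, neg_neg] at h
      calc |f.eval x| ≤ Real.cosh ((d:ℝ) * u) * M := h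
        _ = Real.cosh (u * d) * M := by rw [mul_comm ((d:ℝ)) u]
end

section
/- For any 0 < ℓ ≤ ξ₁ ≤ 1, the map z ↦ arcsin((1−ξ₁)z) sends the stadium {z : dist(z, [−1,1]) ≤ ℓ} into the stadium {w : dist(w, [−arcsin(1−ξ₁), arcsin(1−ξ₁)]) ≤ ((1−ξ₁)/ξ₁)·ℓ}. -/
/-- The principal branch of the complex arcsine,
`arcsin z = −i log(iz + (1 − z²)^{1/2})`. -/
noncomputable def complexArcsin (z : ℂ) : ℂ :=
  -Complex.I * Complex.log (Complex.I * z + (1 - z ^ 2) ^ ((1 : ℂ) / 2))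

/-- Membership in the stadium: the set of complex numbers within distance `ℓ` of the real
interval `[−c, c]`. -/
def inStadium (c ℓ : ℝ) (z : ℂ) : Prop :=
  ∃ x : ℝ, |x| ≤ c ∧ ‖z - (x : ℂ)‖ ≤ ℓ

-- square of the principal square root
lemma sq_cpow_half {x : ℂ} (hx : x ≠ 0) : (x ^ ((1:ℂ)/2)) ^ 2 = x := by
  rw [sq, ← Complex.cpow_add _ _ hx]
  norm_num

lemma re_cpow_half_nonneg {x : ℂ} (hx : x ≠ 0) : 0 ≤ (x ^ ((1:ℂ)/2)).re := by
  rw [Complex.cpow_def_of_ne_zero hx, Complex.exp_re]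
  apply mul_nonneg (Real.exp_pos _).le
  have him : (Complex.log x * ((1:ℂ)/2)).im = x.arg / 2 := by
    simp [Complex.mul_im, Complex.log_im]
    ring
  rw [him]
  apply Real.cos_nonneg_of_mem_Icc
  constructor
  · linarith [Complex.neg_pi_lt_arg x]
  · linarith [Complex.arg_le_pi x]

lemma hasDerivAt_complexArcsin {u : ℂ} (hu : ‖u‖ < 1) :
    HasDerivAt complexArcsin (1 / (1 - u ^ 2) ^ ((1:ℂ)/2)) u := by
  have habs2 : u.re * u.re + u.im * u.im < 1 := by
    have := Complex.sq_norm u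
    rw [Complex.normSq_apply] at this
    nlinarith [norm_nonneg u]
  have hxre : 0 < (1 - u ^ 2).re := by
    have : (u ^ 2).re = u.re * u.re - u.im * u.im := by
      rw [sq]; exact Complex.mul_re u u
    simp [Complex.sub_re, this]
    nlinarith
  have hx0 : (1 : ℂ) - u ^ 2 ≠ 0 := by
    intro h; rw [h] at hxre; simp at hxre
  set s : ℂ := (1 - u ^ 2) ^ ((1:ℂ)/2) with hs_def
  have hs2 : s ^ 2 = 1 - u ^ 2 := sq_cpow_half hx0
  have hs0 : s ≠ 0 := by
    intro h; rw [h] at hs2; simp at hs2; exact hx0 hs2.symm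
  have hsre : 0 ≤ s.re := re_cpow_half_nonneg hx0
  set v : ℂ := Complex.I * u + s with hv_def
  have hv1 : v * (s - Complex.I * u) = 1 := by
    have h2 : Complex.I ^ 2 = -1 := Complex.I_sq
    linear_combination hs2 - u ^ 2 * h2
  have hv0 : v ≠ 0 := by
    intro h; rw [h, zero_mul] at hv1; exact one_ne_zero hv1.symm
  have hvslit : v ∈ Complex.slitPlane := by
    rw [Complex.mem_slitPlane_iff]
    by_contra h
    push_neg at h
    obtain ⟨h1, h2⟩ := h
    have hvre : v.re < 0 := by
      rcases lt_or_eq_of_le h1 with h | h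
      · exact h
      · exfalso; apply hv0; apply Complex.ext <;> simp [← h, h2]
    have hinv : s - Complex.I * u = v⁻¹ := eq_inv_of_mul_eq_one_right
      (by linear_combination hv1)
    have hre1 : (s - Complex.I * u).re = v.re / Complex.normSq v := by
      rw [hinv, Complex.inv_re]
    have hns : 0 < Complex.normSq v := Complex.normSq_pos.mpr hv0
    have hlt : s.re + u.im < 0 := by
      have : (s - Complex.I * u).re = s.re + u.im := by simp
      rw [this] at hre1
      rw [hre1]
      exact div_neg_of_neg_of_pos hvre hns
    have hvre2 : v.re = s.re - u.im := by simp [hv_def]; ring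
    rw [hvre2] at hvre
    linarith
  have hd1 : HasDerivAt (fun w : ℂ => 1 - w ^ 2) (-(2 * u)) u := by
    simpa using (hasDerivAt_pow 2 u).const_sub 1
  have hd2 : HasDerivAt (fun w : ℂ => (1 - w ^ 2) ^ ((1:ℂ)/2))
      ((1:ℂ)/2 * (1 - u ^ 2) ^ ((1:ℂ)/2 - 1) * (-(2 * u))) u :=
    hd1.cpow_const (Complex.mem_slitPlane_iff.mpr (Or.inl hxre))
  have hd3 : HasDerivAt (fun w : ℂ => Complex.I * w + (1 - w ^ 2) ^ ((1:ℂ)/2))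
      (Complex.I + (1:ℂ)/2 * (1 - u ^ 2) ^ ((1:ℂ)/2 - 1) * (-(2 * u))) u := by
    exact ((hasDerivAt_id u).const_mul Complex.I |>.congr_deriv (by simp)).add hd2
  have hd4 := (hd3.clog hvslit).const_mul (-Complex.I)
  have hderiv_eq : -Complex.I * ((Complex.I + (1:ℂ)/2 * (1 - u ^ 2) ^ ((1:ℂ)/2 - 1)
      * (-(2 * u))) / v) = 1 / s := by
    have hpow : (1 - u ^ 2) ^ ((1:ℂ)/2 - 1) = s⁻¹ := by
      have : ((1:ℂ)/2 - 1) = -((1:ℂ)/2) := by norm_num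
      rw [this, Complex.cpow_neg, ← hs_def]
    rw [hpow]
    field_simp
    linear_combination (-s) * Complex.I_sq
  rw [show (1 : ℂ) / s = -Complex.I * ((Complex.I + (1:ℂ)/2 * (1 - u ^ 2) ^ ((1:ℂ)/2 - 1) * (-(2 * u))) / v) from hderiv_eq.symm]
  exact hd4

lemma complexArcsin_ofReal {t : ℝ} (ht : |t| < 1) :
    complexArcsin (t : ℂ) = (Real.arcsin t : ℂ) := by
  have h1 : (0:ℝ) < 1 - t ^ 2 := by nlinarith [sq_abs t, abs_nonneg t]
  set s : ℝ := Real.sqrt (1 - t ^ 2) with hs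
  have hsnn : 0 ≤ s := Real.sqrt_nonneg _
  have hs2 : s ^ 2 = 1 - t ^ 2 := Real.sq_sqrt h1.le
  have hsc : (1 - (t:ℂ) ^ 2) ^ ((1:ℂ)/2) = (s : ℂ) := by
    rw [hs, Real.sqrt_eq_rpow, Complex.ofReal_cpow h1.le]
    push_cast
    norm_num
  have hrev : (Complex.I * (t:ℂ) + (s:ℂ)).re = s := by simp
  have him : (Complex.I * (t:ℂ) + (s:ℂ)).im = t := by simp
  have habs : ‖Complex.I * (t:ℂ) + (s:ℂ)‖ = 1 := by
    rw [Complex.norm_def, Complex.normSq_apply, hrev, him,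
      show s * s + t * t = 1 by nlinarith, Real.sqrt_one]
  have hre : 0 ≤ (Complex.I * (t:ℂ) + (s:ℂ)).re := by simpa using hsnn
  have hlog : Complex.log (Complex.I * (t:ℂ) + (s:ℂ)) = (Real.arcsin t : ℂ) * Complex.I := by
    apply Complex.ext
    · simp [Complex.log_re, habs]
    · simp [Complex.log_im, Complex.arg_of_re_nonneg hre, habs, him]
  unfold complexArcsin
  rw [hsc, hlog]
  have h2 : Complex.I ^ 2 = -1 := Complex.I_sq
  linear_combination (-(Real.arcsin t : ℂ)) * h2


/-- For `0 < ℓ ≤ ξ₁ ≤ 1`, the map `z ↦ arcsin((1−ξ₁)z)` sends the stadium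
of radius `ℓ` around `[−1,1]` into the stadium of radius `((1−ξ₁)/ξ₁)·ℓ` around
`[−arcsin(1−ξ₁), arcsin(1−ξ₁)]`. -/
theorem arcsin_maps_stadium_into_stadium (ℓ ξ₁ : ℝ)
    (hℓ : 0 < ℓ) (hℓξ : ℓ ≤ ξ₁) (hξ : ξ₁ ≤ 1) :
    ∀ z : ℂ, inStadium 1 ℓ z →
      inStadium (Real.arcsin (1 - ξ₁)) ((1 - ξ₁) / ξ₁ * ℓ)
        (complexArcsin ((1 - ξ₁ : ℝ) * z)) := by
  intro z ⟨x, hx, hzx⟩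
  have hξ0 : 0 < ξ₁ := lt_of_lt_of_le hℓ hℓξ
  set a : ℝ := 1 - ξ₁ with ha
  have ha0 : 0 ≤ a := by rw [ha]; linarith
  have ha1 : a < 1 := by rw [ha]; linarith
  rcases eq_or_lt_of_le ha0 with h0 | hapos
  · -- a = 0
    refine ⟨0, by simpa using Real.arcsin_nonneg.mpr ha0, ?_⟩
    have hz0 : ((a:ℝ):ℂ) * z = 0 := by rw [← h0]; simp
    rw [hz0]
    unfold complexArcsin
    norm_num [Complex.one_cpow, Complex.log_one]
    positivity
  · -- 0 < a
    refine ⟨Real.arcsin (a * x), ?_, ?_⟩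
    · rw [abs_le]
      constructor
      · rw [← Real.arcsin_neg]
        apply Real.monotone_arcsin
        nlinarith [abs_le.mp hx]
      · apply Real.monotone_arcsin
        nlinarith [abs_le.mp hx]
    · -- the distance bound via MVT
      have hax : |a * x| < 1 := by
        rw [abs_mul, abs_of_nonneg ha0]
        nlinarith
      have harc : complexArcsin ((a : ℂ) * (x : ℂ)) = (Real.arcsin (a * x) : ℂ) := by
        rw [show (a : ℂ) * (x : ℂ) = ((a * x : ℝ) : ℂ) by push_cast; ring]
        exact complexArcsin_ofReal hax
      set D : Set ℂ := Metric.closedBall (0 : ℂ) (a * (1 + ℓ)) with hD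
      have hr1 : a * (1 + ℓ) ≤ 1 - ξ₁ ^ 2 := by nlinarith
      have hmemD : ∀ u ∈ D, ‖u‖ ≤ 1 - ξ₁ ^ 2 := by
        intro u hu
        rw [hD, Metric.mem_closedBall, dist_zero_right] at hu
        calc ‖u‖ = ‖u‖ := rfl
        _ ≤ a * (1 + ℓ) := hu
        _ ≤ 1 - ξ₁ ^ 2 := hr1
      have hlt1 : ∀ u ∈ D, ‖u‖ < 1 := by
        intro u hu
        have := hmemD u hu
        nlinarith
      have hbound : ∀ u ∈ D, ‖1 / (1 - u ^ 2) ^ ((1:ℂ)/2)‖ ≤ 1 / ξ₁ := by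
        intro u hu
        have huab := hmemD u hu
        have hab0 := norm_nonneg u
        have hxne : (1 : ℂ) - u ^ 2 ≠ 0 := by
          intro h
          have hu2 : u ^ 2 = 1 := by linear_combination -h
          have : ‖u‖ ^ 2 = 1 := by rw [← norm_pow, hu2, norm_one]
          nlinarith
        have hsq : ((1 - u ^ 2) ^ ((1:ℂ)/2)) ^ 2 = 1 - u ^ 2 := sq_cpow_half hxne
        have habs_sq : (‖(1 - u ^ 2) ^ ((1:ℂ)/2)‖) ^ 2 = ‖1 - u ^ 2‖ := by
          rw [← norm_pow, hsq]
        have hlow : ξ₁ ^ 2 ≤ ‖1 - u ^ 2‖ := by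
          have h1 : 1 - ‖u‖ ^ 2 ≤ ‖1 - u ^ 2‖ := by
            have := norm_sub_norm_le (1 : ℂ) (u ^ 2)
            simpa [norm_pow] using this
          nlinarith
        have hsabs : ξ₁ ≤ ‖(1 - u ^ 2) ^ ((1:ℂ)/2)‖ := by
          nlinarith [norm_nonneg ((1 - u ^ 2) ^ ((1:ℂ)/2))]
        rw [norm_div, norm_one]
        rw [show ‖(1 - u ^ 2) ^ ((1:ℂ)/2)‖ = ‖(1 - u ^ 2) ^ ((1:ℂ)/2)‖ from rfl]
        exact one_div_le_one_div_of_le hξ0 hsabs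
      have hderivD : ∀ u ∈ D, HasDerivWithinAt complexArcsin (1 / (1 - u ^ 2) ^ ((1:ℂ)/2)) D u :=
        fun u hu => (hasDerivAt_complexArcsin (hlt1 u hu)).hasDerivWithinAt
      have hw1 : ((a : ℂ) * (x : ℂ)) ∈ D := by
        rw [hD, Metric.mem_closedBall, dist_zero_right]
        rw [show ‖(a:ℂ) * (x:ℂ)‖ = a * |x| by
          rw [norm_mul, Complex.norm_real, Complex.norm_real, Real.norm_eq_abs, Real.norm_eq_abs, abs_of_nonneg ha0]]
        nlinarith
      have hdist : ‖(a:ℂ) * z - (a:ℂ) * (x:ℂ)‖ ≤ a * ℓ := by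
        rw [← mul_sub, norm_mul, Complex.norm_real, Real.norm_eq_abs, abs_of_nonneg ha0]
        have h1 : ‖z - (x:ℂ)‖ = ‖z - (x:ℂ)‖ := rfl
        rw [h1]
        nlinarith
      have haxn : ‖(a:ℂ) * (x:ℂ)‖ ≤ a * 1 := by
        rw [norm_mul, Complex.norm_real, Complex.norm_real, Real.norm_eq_abs,
          Real.norm_eq_abs, abs_of_nonneg ha0]
        nlinarith
      have hw2 : ((a : ℂ) * z) ∈ D := by
        rw [hD, Metric.mem_closedBall, dist_zero_right]
        calc ‖(a:ℂ) * z‖ ≤ ‖(a:ℂ) * z - (a:ℂ) * (x:ℂ)‖ + ‖(a:ℂ) * (x:ℂ)‖ := by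
              simpa using norm_add_le ((a:ℂ) * z - (a:ℂ) * (x:ℂ)) ((a:ℂ) * (x:ℂ))
        _ ≤ a * ℓ + a * 1 := add_le_add hdist haxn
        _ ≤ a * (1 + ℓ) := by ring_nf; linarith
      have hmvt := Convex.norm_image_sub_le_of_norm_hasDerivWithin_le
        hderivD hbound (convex_closedBall _ _) hw1 hw2
      have : ‖complexArcsin ((a:ℂ) * z) - (Real.arcsin (a * x) : ℂ)‖
          = ‖complexArcsin ((a:ℂ) * z) - complexArcsin ((a:ℂ) * (x:ℂ))‖ := by
        rw [harc]
      rw [this]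
      calc ‖complexArcsin ((a:ℂ) * z) - complexArcsin ((a:ℂ) * (x:ℂ))‖
          ≤ 1 / ξ₁ * ‖(a:ℂ) * z - (a:ℂ) * (x:ℂ)‖ := hmvt
      _ ≤ 1 / ξ₁ * (a * ℓ) := by
          apply mul_le_mul_of_nonneg_left hdist
          positivity
      _ = a / ξ₁ * ℓ := by ring
end
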